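/- arXiv:0912.3844 — 8 statements merged into one kernel-verified Lean document; each statement's English description precedes it below -/
import Mathlib

section
/- The improper integral ∫₁^∞ e^{iπx} · x^(1/x) · (1 − ln x)/x² dx converges absolutely, the limit M_I := lim_{N→∞, N∈ℕ} ∫₁^{2N} e^{iπx} · x^(1/x) dx exists in ℂ, and M_I = −2i/π + (i/π) · ∫₁^∞ e^{iπx} · x^(1/x) · (1 − ln x)/x² dx. -/
open MeasureTheory Filter Set

private lemma hasDeriv_aux {x : ℝ} (hx : 0 < x) :
    HasDerivAt (fun y : ℝ => Complex.exp ((Real.pi : ℂ) * Complex.I * y) *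
        (Real.exp (Real.log y / y) : ℂ) / ((Real.pi : ℂ) * Complex.I))
      (Complex.exp ((Real.pi : ℂ) * Complex.I * x) * (Real.exp (Real.log x / x) : ℂ) +
        Complex.exp ((Real.pi : ℂ) * Complex.I * x) * (Real.exp (Real.log x / x) : ℂ) *
          (((1 - Real.log x) / x ^ 2 : ℝ) : ℂ) / ((Real.pi : ℂ) * Complex.I)) x := by
  have hπ : ((Real.pi : ℂ)) ≠ 0 := Complex.ofReal_ne_zero.2 Real.pi_ne_zero
  have he : HasDerivAt (fun y : ℝ => Complex.exp ((Real.pi : ℂ) * Complex.I * y))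
      (Complex.exp ((Real.pi : ℂ) * Complex.I * x) * ((Real.pi : ℂ) * Complex.I)) x := by
    have h1 : HasDerivAt (fun y : ℝ => ((Real.pi : ℂ) * Complex.I * y))
        ((Real.pi : ℂ) * Complex.I) x := by
      simpa using (Complex.ofRealCLM.hasDerivAt (x := x)).const_mul ((Real.pi : ℂ) * Complex.I)
    simpa using h1.cexp
  have hlog : HasDerivAt (fun y : ℝ => Real.log y / y) ((1 - Real.log x) / x ^ 2) x := by
    have := (Real.hasDerivAt_log hx.ne').div (hasDerivAt_id x) hx.ne'
    refine this.congr_deriv ?_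
    simp only [id, mul_one, inv_mul_cancel₀ hx.ne']
  have hf : HasDerivAt (fun y : ℝ => (Real.exp (Real.log y / y) : ℂ))
      ((Real.exp (Real.log x / x) * ((1 - Real.log x) / x ^ 2) : ℝ) : ℂ) x :=
    (hlog.exp).ofReal_comp
  have h2 := (he.mul hf).div_const ((Real.pi : ℂ) * Complex.I)
  refine h2.congr_deriv ?_
  have hx' : ((x : ℂ)) ≠ 0 := Complex.ofReal_ne_zero.2 hx.ne'
  push_cast
  field_simp

private lemma norm_bound {x : ℝ} (hx : 1 ≤ x) :
    ‖Complex.exp ((Real.pi : ℂ) * Complex.I * (x : ℂ)) *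
        (Real.exp (Real.log x / x) : ℂ) * (((1 - Real.log x) / x ^ 2 : ℝ) : ℂ)‖ ≤
      9 * x ^ (-(3:ℝ)/2) := by
  have hx0 : (0:ℝ) < x := lt_of_lt_of_le one_pos hx
  have hnorm1 : ‖Complex.exp ((Real.pi : ℂ) * Complex.I * (x : ℂ))‖ = 1 := by
    rw [Complex.norm_exp]
    simp
  rw [norm_mul, norm_mul, hnorm1, one_mul, Complex.norm_real, Complex.norm_real,
    Real.norm_eq_abs, Real.norm_eq_abs]
  have hf : |Real.exp (Real.log x / x)| ≤ 3 := by
    rw [abs_of_pos (Real.exp_pos _)]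
    calc Real.exp (Real.log x / x) ≤ Real.exp 1 := by
          apply Real.exp_le_exp.2
          rw [div_le_one hx0]
          linarith [Real.log_le_sub_one_of_pos hx0]
      _ ≤ 3 := by linarith [Real.exp_one_lt_d9]
  have hsq : Real.sqrt x ≥ 1 := Real.one_le_sqrt.2 hx
  have hlog : |1 - Real.log x| ≤ 3 * Real.sqrt x := by
    have h0 : 0 ≤ Real.log x := Real.log_nonneg hx
    have h1 : Real.log x ≤ 2 * Real.sqrt x := by
      have := Real.log_le_sub_one_of_pos (Real.sqrt_pos.2 hx0)
      have h2 : Real.log (Real.sqrt x) = Real.log x / 2 := Real.log_sqrt hx0.le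
      nlinarith
    rw [abs_le]
    constructor <;> nlinarith
  have hg : |(1 - Real.log x) / x ^ 2| ≤ 3 * x ^ (-(3:ℝ)/2) := by
    rw [abs_div, abs_of_pos (by positivity : (0:ℝ) < x ^ 2)]
    rw [div_le_iff₀ (by positivity : (0:ℝ) < x ^ 2)]
    have hkey : (3:ℝ) * x ^ (-(3:ℝ)/2) * x ^ 2 = 3 * Real.sqrt x := by
      rw [Real.sqrt_eq_rpow, mul_assoc, ← Real.rpow_natCast x 2, ← Real.rpow_add hx0]
      norm_num
    rw [hkey]
    exact hlog
  calc |Real.exp (Real.log x / x)| * |(1 - Real.log x) / x ^ 2|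
      ≤ 3 * (3 * x ^ (-(3:ℝ)/2)) :=
        mul_le_mul hf hg (abs_nonneg _) (by norm_num)
    _ = 9 * x ^ (-(3:ℝ)/2) := by ring

private lemma contOn_G : ContinuousOn
    (fun x : ℝ => Complex.exp ((Real.pi : ℂ) * Complex.I * (x : ℂ)) *
        (Real.exp (Real.log x / x) : ℂ) * (((1 - Real.log x) / x ^ 2 : ℝ) : ℂ))
    {x : ℝ | 0 < x} := by
  have h1 : Continuous fun x : ℝ => Complex.exp ((Real.pi : ℂ) * Complex.I * (x : ℂ)) :=
    Complex.continuous_exp.comp (continuous_const.mul Complex.continuous_ofReal)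
  have h2 : ContinuousOn (fun x : ℝ => (Real.exp (Real.log x / x) : ℂ)) {x : ℝ | 0 < x} := by
    apply Complex.continuous_ofReal.comp_continuousOn
    apply Real.continuous_exp.comp_continuousOn
    exact (Real.continuousOn_log.mono (fun x hx => ne_of_gt hx)).div
      continuousOn_id (fun x hx => ne_of_gt hx)
  have h3 : ContinuousOn (fun x : ℝ => (((1 - Real.log x) / x ^ 2 : ℝ) : ℂ)) {x : ℝ | 0 < x} := by
    apply Complex.continuous_ofReal.comp_continuousOn
    exact ((continuousOn_const.sub (Real.continuousOn_log.mono (fun x hx => ne_of_gt hx))).div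
      (continuousOn_id.pow 2)
      (fun x hx => by
        simpa using pow_ne_zero 2 (ne_of_gt (show (0:ℝ) < x from hx))))
  exact (h1.continuousOn.mul h2).mul h3

private lemma contOn_F : ContinuousOn
    (fun x : ℝ => Complex.exp ((Real.pi : ℂ) * Complex.I * (x : ℂ)) *
        (Real.exp (Real.log x / x) : ℂ))
    {x : ℝ | 0 < x} := by
  have h1 : Continuous fun x : ℝ => Complex.exp ((Real.pi : ℂ) * Complex.I * (x : ℂ)) :=
    Complex.continuous_exp.comp (continuous_const.mul Complex.continuous_ofReal)
  have h2 : ContinuousOn (fun x : ℝ => (Real.exp (Real.log x / x) : ℂ)) {x : ℝ | 0 < x} := by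
    apply Complex.continuous_ofReal.comp_continuousOn
    apply Real.continuous_exp.comp_continuousOn
    exact (Real.continuousOn_log.mono (fun x hx => ne_of_gt hx)).div
      continuousOn_id (fun x hx => ne_of_gt hx)
  exact h1.continuousOn.mul h2

private lemma integrableG : IntegrableOn
    (fun x : ℝ => Complex.exp ((Real.pi : ℂ) * Complex.I * (x : ℂ)) *
        (Real.exp (Real.log x / x) : ℂ) * (((1 - Real.log x) / x ^ 2 : ℝ) : ℂ))
    (Set.Ioi (1 : ℝ)) := by
  have hbd : IntegrableOn (fun x : ℝ => 9 * x ^ (-(3:ℝ)/2)) (Set.Ioi (1 : ℝ)) :=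
    (integrableOn_Ioi_rpow_of_lt (by norm_num : (-(3:ℝ)/2) < -1) one_pos).const_mul 9
  apply Integrable.mono' hbd
  · exact (contOn_G.mono (t := Set.Ioi (1:ℝ)) (fun x hx => show (0:ℝ) < x from lt_trans one_pos hx)).aestronglyMeasurable
      measurableSet_Ioi
  · filter_upwards [ae_restrict_mem measurableSet_Ioi] with x hx
    exact norm_bound (le_of_lt hx)

/-- The improper integral `∫₁^∞ e^{iπx} x^(1/x) (1 - ln x)/x² dx` converges absolutely,
the limit `M_I = lim_{N→∞} ∫₁^{2N} e^{iπx} x^(1/x) dx` exists, and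
`M_I = -2i/π + (i/π) ∫₁^∞ e^{iπx} x^(1/x) (1 - ln x)/x² dx`. -/
theorem oscillatory_integral_partial_integration :
    IntegrableOn
      (fun x : ℝ => Complex.exp ((Real.pi : ℂ) * Complex.I * (x : ℂ)) *
        (Real.exp (Real.log x / x) : ℂ) * (((1 - Real.log x) / x ^ 2 : ℝ) : ℂ))
      (Set.Ioi (1 : ℝ)) ∧
    ∃ M : ℂ,
      Tendsto
        (fun N : ℕ => ∫ x in (1 : ℝ)..(2 * N : ℝ),
          Complex.exp ((Real.pi : ℂ) * Complex.I * (x : ℂ)) *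
            (Real.exp (Real.log x / x) : ℂ))
        atTop (nhds M) ∧
      M = -2 * Complex.I / (Real.pi : ℂ) +
          (Complex.I / (Real.pi : ℂ)) *
            ∫ x in Set.Ioi (1 : ℝ),
              Complex.exp ((Real.pi : ℂ) * Complex.I * (x : ℂ)) *
                (Real.exp (Real.log x / x) : ℂ) *
                (((1 - Real.log x) / x ^ 2 : ℝ) : ℂ) := by
  set G : ℝ → ℂ := fun x : ℝ => Complex.exp ((Real.pi : ℂ) * Complex.I * (x : ℂ)) *
        (Real.exp (Real.log x / x) : ℂ) * (((1 - Real.log x) / x ^ 2 : ℝ) : ℂ) with hG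
  set F : ℝ → ℂ := fun x : ℝ => Complex.exp ((Real.pi : ℂ) * Complex.I * (x : ℂ)) *
        (Real.exp (Real.log x / x) : ℂ) with hF
  set c : ℂ := (Real.pi : ℂ) * Complex.I with hc
  refine ⟨integrableG, ?_⟩
  refine ⟨2 / c - (1 / c) * ∫ x in Set.Ioi (1 : ℝ), G x, ?_, ?_⟩
  · have key : ∀ N : ℕ, 1 ≤ N →
        (∫ x in (1 : ℝ)..(2 * N : ℝ), F x) =
          ((Real.exp (Real.log (2 * N) / (2 * N)) : ℂ) / c + 1 / c) -
            (1 / c) * ∫ x in (1 : ℝ)..(2 * N : ℝ), G x := by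
      intro N hN
      have h2N : (1:ℝ) ≤ 2 * (N:ℝ) := by
        have : (1:ℝ) ≤ (N:ℝ) := by exact_mod_cast hN
        linarith
      have huIcc : Set.uIcc (1:ℝ) (2 * (N:ℝ)) = Set.Icc (1:ℝ) (2 * (N:ℝ)) :=
        Set.uIcc_of_le h2N
      have hsub : Set.uIcc (1:ℝ) (2 * (N:ℝ)) ⊆ {x : ℝ | 0 < x} := by
        rw [huIcc]; intro x hx; exact lt_of_lt_of_le one_pos hx.1
      have hintF : IntervalIntegrable F volume 1 (2 * N) :=
        (contOn_F.mono hsub).intervalIntegrable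
      have hintG : IntervalIntegrable G volume 1 (2 * N) :=
        (contOn_G.mono hsub).intervalIntegrable
      have hftc : (∫ x in (1:ℝ)..(2 * N : ℝ), (F x + G x / c)) =
          F (2 * N) / c - F 1 / c := by
        refine intervalIntegral.integral_eq_sub_of_hasDerivAt
          (f := fun y : ℝ => F y / c) (f' := fun y : ℝ => F y + G y / c) ?_ ?_
        · intro x hx
          exact hasDeriv_aux (lt_of_lt_of_le one_pos ((huIcc ▸ hx).1))
        · exact hintF.add (hintG.div_const c)
      rw [intervalIntegral.integral_add hintF (hintG.div_const c),
        intervalIntegral.integral_div c G] at hftc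
      have hF2N : F (2 * (N:ℝ)) = (Real.exp (Real.log (2 * N) / (2 * N)) : ℂ) := by
        have h1 : c * ((2 * (N:ℝ) : ℝ) : ℂ) = (N : ℂ) * (2 * (Real.pi : ℂ) * Complex.I) := by
          rw [hc]; push_cast; ring
        simp only [hF]
        rw [h1, Complex.exp_nat_mul, Complex.exp_two_pi_mul_I, one_pow, one_mul]
      have hF1 : F 1 = -1 := by
        have h1 : c * ((1:ℝ) : ℂ) = (Real.pi : ℂ) * Complex.I := by
          rw [hc]; push_cast; ring
        simp only [hF]
        rw [h1, Complex.exp_pi_mul_I]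
        norm_num
      rw [hF2N, hF1] at hftc
      linear_combination hftc
    have heq : ∀ᶠ N : ℕ in atTop,
        ((Real.exp (Real.log (2 * N) / (2 * N)) : ℂ) / c + 1 / c) -
            (1 / c) * (∫ x in (1 : ℝ)..(2 * N : ℝ), G x) =
        (∫ x in (1 : ℝ)..(2 * N : ℝ), F x) := by
      filter_upwards [eventually_ge_atTop 1] with N hN
      exact (key N hN).symm
    apply Tendsto.congr' heq
    have h2Ntop : Tendsto (fun N : ℕ => (2 * N : ℝ)) atTop atTop :=
      Tendsto.const_mul_atTop two_pos tendsto_natCast_atTop_atTop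
    have hGlim : Tendsto (fun N : ℕ => ∫ x in (1:ℝ)..(2 * N : ℝ), G x) atTop
        (nhds (∫ x in Set.Ioi (1:ℝ), G x)) :=
      intervalIntegral_tendsto_integral_Ioi 1 integrableG h2Ntop
    have hexp_lim : Tendsto (fun N : ℕ => (Real.exp (Real.log (2 * N) / (2 * N)) : ℂ))
        atTop (nhds 1) := by
      have h0 : Tendsto (fun y : ℝ => Real.log y / y) atTop (nhds 0) :=
        Real.isLittleO_log_id_atTop.tendsto_div_nhds_zero
      have h1 : Tendsto (fun N : ℕ => Real.exp (Real.log (2 * N) / (2 * N))) atTop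
          (nhds 1) := by
        have := (Real.continuous_exp.tendsto 0).comp (h0.comp h2Ntop)
        simpa [Function.comp_def] using this
      have h2 := (Complex.continuous_ofReal.tendsto 1).comp h1
      rw [Complex.ofReal_one] at h2
      exact h2.congr fun N => rfl
    have hmain : Tendsto (fun N : ℕ =>
        ((Real.exp (Real.log (2 * N) / (2 * N)) : ℂ) / c + 1 / c) -
          (1 / c) * (∫ x in (1 : ℝ)..(2 * N : ℝ), G x)) atTop
        (nhds (((1 : ℂ) / c + 1 / c) - (1 / c) * ∫ x in Set.Ioi (1:ℝ), G x)) :=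
      ((hexp_lim.div_const c).add tendsto_const_nhds).sub (hGlim.const_mul (1 / c))
    convert hmain using 2
    ring
  · rw [hc]
    simp only [div_eq_mul_inv, mul_inv, Complex.inv_I]
    ring
end

section
/- Define integer coefficients α : ℕ × ℤ × ℤ → ℤ by α(n,r,s) = 0 whenever r < 0 or s < 0, α(0,0,0) = 1, and the recurrence α(n+1,r,s) = α(n,r−2,s) − α(n,r−2,s−1) + (s+1)·α(n,r−1,s+1) − (r−1)·α(n,r−1,s). Then for every n ∈ ℕ and every real x > 0, the n-th derivative of f(x) = x^(1/x) equals x^(1/x) · Σ_{r=0}^{2n} Σ_{s=0}^{n} α(n,r,s) · (ln x)^s / x^r. -/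
/-- The coefficients `α(n,r,s)`: `α(n,r,s) = 0` whenever `r < 0` or `s < 0`,
`α(0,0,0) = 1` (and `α(0,r,s) = 0` otherwise), with the recurrence
`α(n+1,r,s) = α(n,r-2,s) - α(n,r-2,s-1) + (s+1)·α(n,r-1,s+1) - (r-1)·α(n,r-1,s)`. -/
def alphaCoef : ℕ → ℤ → ℤ → ℤ
  | 0, r, s => if r = 0 ∧ s = 0 then 1 else 0
  | n + 1, r, s =>
      if r < 0 ∨ s < 0 then 0
      else
        alphaCoef n (r - 2) s - alphaCoef n (r - 2) (s - 1) +
          (s + 1) * alphaCoef n (r - 1) (s + 1) - (r - 1) * alphaCoef n (r - 1) s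

lemma alphaCoef_vanish : ∀ (n : ℕ) (r s : ℤ),
    (r < 0 ∨ s < 0 ∨ (2*n : ℤ) < r ∨ (n : ℤ) < s) → alphaCoef n r s = 0 := by
  intro n
  induction n with
  | zero =>
    intro r s h
    simp only [alphaCoef]
    rw [if_neg]
    rintro ⟨rfl, rfl⟩
    simp at h
  | succ n ih =>
    intro r s h
    simp only [alphaCoef]
    split_ifs with hc
    · rfl
    · push_neg at hc
      obtain ⟨hr, hs⟩ := hc
      have h' : (2*n:ℤ)+2 < r ∨ (n:ℤ)+1 < s := by
        push_cast at h
        rcases h with h|h|h|h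
        · omega
        · omega
        · left; omega
        · right; omega
      rw [ih (r-2) s (by omega), ih (r-2) (s-1) (by omega),
        ih (r-1) (s+1) (by omega), ih (r-1) s (by omega)]
      ring

lemma sum_shift (f : ℤ → ℝ) (k N M : ℕ) (hM : N + k ≤ M)
    (h0 : ∀ m : ℤ, m < 0 → f m = 0) (hN : ∀ m : ℤ, (N:ℤ) ≤ m → f m = 0) :
    ∑ r ∈ Finset.range M, f ((r:ℤ) - (k:ℤ)) = ∑ r ∈ Finset.range N, f (r:ℤ) := by
  induction k generalizing M with
  | zero =>
    have : ∀ r : ℕ, f ((r:ℤ) - (0:ℕ)) = f (r:ℤ) := by intro r; congr 1 <;> omega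
    rw [Finset.sum_congr rfl fun r _ => this r]
    refine (Finset.sum_subset (Finset.range_subset_range.mpr (by omega)) ?_).symm
    intro i _ hi
    simp only [Finset.mem_range, not_lt] at hi
    exact hN _ (by push_cast; omega)
  | succ k ihk =>
    obtain ⟨M', rfl⟩ : ∃ M', M = M' + 1 := ⟨M - 1, by omega⟩
    rw [Finset.sum_range_succ' (fun r : ℕ => f ((r:ℤ) - ((k+1:ℕ):ℤ))) M']
    have h2 : ∀ r : ℕ, f (((r+1:ℕ):ℤ) - ((k+1:ℕ):ℤ)) = f ((r:ℤ) - (k:ℤ)) := by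
      intro r; congr 1 <;> omega
    have h3 : f (((0:ℕ):ℤ) - ((k+1:ℕ):ℤ)) = 0 := h0 _ (by omega)
    rw [Finset.sum_congr rfl fun r _ => h2 r, h3, add_zero]
    exact ihk M' (by omega)

lemma sum_shift_neg (f : ℤ → ℝ) (N M : ℕ) (hM : N ≤ M + 1) (h0 : f 0 = 0)
    (hN : ∀ m : ℤ, (N:ℤ) ≤ m → f m = 0) :
    ∑ s ∈ Finset.range M, f ((s:ℤ)+1) = ∑ s ∈ Finset.range N, f (s:ℤ) := by
  have h := Finset.sum_range_succ' (fun s : ℕ => f (s:ℤ)) M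
  have h2 : ∀ s : ℕ, f ((s:ℤ)+1) = f (((s+1 : ℕ)) : ℤ) := by intro s; congr 1 <;> omega
  calc ∑ s ∈ Finset.range M, f ((s:ℤ)+1)
      = ∑ s ∈ Finset.range M, f (((s+1:ℕ)):ℤ) := Finset.sum_congr rfl fun s _ => h2 s
    _ = ∑ s ∈ Finset.range (M+1), f (s:ℤ) := by
        rw [h]
        norm_num
        exact h0
    _ = ∑ s ∈ Finset.range N, f (s:ℤ) := by
        refine (Finset.sum_subset (Finset.range_subset_range.mpr hM) ?_).symm
        intro i _ hi
        simp only [Finset.mem_range, not_lt] at hi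
        exact hN _ (by push_cast; omega)

lemma sum_drop (N : ℕ) (g : ℕ → ℝ) (h : g N = 0) :
    ∑ s ∈ Finset.range (N+1), g s = ∑ s ∈ Finset.range N, g s := by
  rw [Finset.sum_range_succ, h, add_zero]

lemma T1eq (n : ℕ) (x y : ℝ) :
    (∑ r ∈ Finset.range (2*n+3), ∑ s ∈ Finset.range (n+2),
      (alphaCoef n ((r:ℤ)-2) (s:ℤ) : ℝ) * y ^ s / x ^ r)
    = ∑ r ∈ Finset.range (2*n+1), ∑ s ∈ Finset.range (n+1),
      (alphaCoef n (r:ℤ) (s:ℤ) : ℝ) * y ^ s / x ^ (r+2) := by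
  have step1 : ∀ m : ℤ, ∀ r : ℕ, (m + 2 = (r:ℤ)) →
      ∑ s ∈ Finset.range (n+2), (alphaCoef n m (s:ℤ) : ℝ) * y ^ s / x ^ r
      = ∑ s ∈ Finset.range (n+1), (alphaCoef n m (s:ℤ) : ℝ) * y ^ s / x ^ ((m+2) : ℤ) := by
    intro m r hm
    rw [sum_drop (n+1) _ (by
      rw [alphaCoef_vanish n m ((n+1:ℕ):ℤ) (by right; right; right; push_cast; omega)]
      simp)]
    refine Finset.sum_congr rfl fun s _ => ?_
    rw [hm, zpow_natCast]
  calc (∑ r ∈ Finset.range (2*n+3), ∑ s ∈ Finset.range (n+2),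
        (alphaCoef n ((r:ℤ)-2) (s:ℤ) : ℝ) * y ^ s / x ^ r)
      = ∑ r ∈ Finset.range (2*n+3),
          (fun m : ℤ => ∑ s ∈ Finset.range (n+1), (alphaCoef n m (s:ℤ) : ℝ) * y ^ s / x ^ ((m+2):ℤ))
            ((r:ℤ) - (2:ℕ)) := by
        refine Finset.sum_congr rfl fun r _ => ?_
        exact step1 ((r:ℤ)-2) r (by omega)
    _ = ∑ r ∈ Finset.range (2*n+1),
          (fun m : ℤ => ∑ s ∈ Finset.range (n+1), (alphaCoef n m (s:ℤ) : ℝ) * y ^ s / x ^ ((m+2):ℤ))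
            (r:ℤ) := by
        refine sum_shift (fun m : ℤ => ∑ s ∈ Finset.range (n+1), (alphaCoef n m (s:ℤ) : ℝ) * y ^ s / x ^ ((m+2):ℤ)) 2 (2*n+1) (2*n+3) (by omega) ?_ ?_
        · intro m hm
          refine Finset.sum_eq_zero fun s _ => ?_
          rw [alphaCoef_vanish n m s (by omega)]; simp
        · intro m hm
          refine Finset.sum_eq_zero fun s _ => ?_
          rw [alphaCoef_vanish n m s (by right; right; left; push_cast at hm ⊢; omega)]; simp
    _ = ∑ r ∈ Finset.range (2*n+1), ∑ s ∈ Finset.range (n+1),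
        (alphaCoef n (r:ℤ) (s:ℤ) : ℝ) * y ^ s / x ^ (r+2) := by
        refine Finset.sum_congr rfl fun r _ => Finset.sum_congr rfl fun s _ => ?_
        rw [show ((r:ℤ)+2) = ((r+2:ℕ):ℤ) by omega, zpow_natCast]

lemma T2eq (n : ℕ) (x y : ℝ) :
    (∑ r ∈ Finset.range (2*n+3), ∑ s ∈ Finset.range (n+2),
      (alphaCoef n ((r:ℤ)-2) ((s:ℤ)-1) : ℝ) * y ^ s / x ^ r)
    = ∑ r ∈ Finset.range (2*n+1), ∑ s ∈ Finset.range (n+1),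
      (alphaCoef n (r:ℤ) (s:ℤ) : ℝ) * y ^ (s+1) / x ^ (r+2) := by
  have step1 : ∀ m : ℤ, ∀ r : ℕ, (m + 2 = (r:ℤ)) →
      ∑ s ∈ Finset.range (n+2), (alphaCoef n m ((s:ℤ)-1) : ℝ) * y ^ s / x ^ r
      = ∑ s ∈ Finset.range (n+1), (alphaCoef n m (s:ℤ) : ℝ) * y ^ (s+1) / x ^ ((m+2) : ℤ) := by
    intro m r hm
    calc ∑ s ∈ Finset.range (n+2), (alphaCoef n m ((s:ℤ)-1) : ℝ) * y ^ s / x ^ r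
        = ∑ s ∈ Finset.range (n+2),
            (fun q : ℤ => (alphaCoef n m q : ℝ) * y ^ ((q+1):ℤ) / x ^ r) ((s:ℤ) - (1:ℕ)) := by
          refine Finset.sum_congr rfl fun s _ => ?_
          simp only
          rw [show ((s:ℤ) - (1:ℕ) + 1) = ((s:ℕ):ℤ) by omega, zpow_natCast]
          norm_num
      _ = ∑ s ∈ Finset.range (n+1),
            (fun q : ℤ => (alphaCoef n m q : ℝ) * y ^ ((q+1):ℤ) / x ^ r) (s:ℤ) := by
          refine sum_shift (fun q : ℤ => (alphaCoef n m q : ℝ) * y ^ ((q+1):ℤ) / x ^ r) 1 (n+1) (n+2) (by omega) ?_ ?_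
          · intro q hq
            rw [alphaCoef_vanish n m q (by omega)]; simp
          · intro q hq
            rw [alphaCoef_vanish n m q (by right; right; right; omega)]; simp
      _ = ∑ s ∈ Finset.range (n+1), (alphaCoef n m (s:ℤ) : ℝ) * y ^ (s+1) / x ^ ((m+2) : ℤ) := by
          refine Finset.sum_congr rfl fun s _ => ?_
          simp only
          rw [show ((s:ℤ)+1) = ((s+1:ℕ):ℤ) by omega, zpow_natCast, hm, zpow_natCast]
  calc (∑ r ∈ Finset.range (2*n+3), ∑ s ∈ Finset.range (n+2),
        (alphaCoef n ((r:ℤ)-2) ((s:ℤ)-1) : ℝ) * y ^ s / x ^ r)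
      = ∑ r ∈ Finset.range (2*n+3),
          (fun m : ℤ => ∑ s ∈ Finset.range (n+1), (alphaCoef n m (s:ℤ) : ℝ) * y ^ (s+1) / x ^ ((m+2):ℤ))
            ((r:ℤ) - (2:ℕ)) := by
        refine Finset.sum_congr rfl fun r _ => ?_
        exact step1 ((r:ℤ)-2) r (by omega)
    _ = ∑ r ∈ Finset.range (2*n+1),
          (fun m : ℤ => ∑ s ∈ Finset.range (n+1), (alphaCoef n m (s:ℤ) : ℝ) * y ^ (s+1) / x ^ ((m+2):ℤ))
            (r:ℤ) := by
        refine sum_shift (fun m : ℤ => ∑ s ∈ Finset.range (n+1),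
          (alphaCoef n m (s:ℤ) : ℝ) * y ^ (s+1) / x ^ ((m+2):ℤ)) 2 (2*n+1) (2*n+3) (by omega) ?_ ?_
        · intro m hm
          refine Finset.sum_eq_zero fun s _ => ?_
          rw [alphaCoef_vanish n m s (by omega)]; simp
        · intro m hm
          refine Finset.sum_eq_zero fun s _ => ?_
          rw [alphaCoef_vanish n m s (by right; right; left; push_cast at hm ⊢; omega)]; simp
    _ = ∑ r ∈ Finset.range (2*n+1), ∑ s ∈ Finset.range (n+1),
        (alphaCoef n (r:ℤ) (s:ℤ) : ℝ) * y ^ (s+1) / x ^ (r+2) := by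
        refine Finset.sum_congr rfl fun r _ => Finset.sum_congr rfl fun s _ => ?_
        rw [show ((r:ℤ)+2) = ((r+2:ℕ):ℤ) by omega, zpow_natCast]

lemma T3eq (n : ℕ) (x y : ℝ) :
    (∑ r ∈ Finset.range (2*n+3), ∑ s ∈ Finset.range (n+2),
      ((s:ℝ)+1) * (alphaCoef n ((r:ℤ)-1) ((s:ℤ)+1) : ℝ) * y ^ s / x ^ r)
    = ∑ r ∈ Finset.range (2*n+1), ∑ s ∈ Finset.range (n+1),
      (s:ℝ) * (alphaCoef n (r:ℤ) (s:ℤ) : ℝ) * y ^ (s-1) / x ^ (r+1) := by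
  have step1 : ∀ m : ℤ, ∀ r : ℕ, (m + 1 = (r:ℤ)) →
      ∑ s ∈ Finset.range (n+2), ((s:ℝ)+1) * (alphaCoef n m ((s:ℤ)+1) : ℝ) * y ^ s / x ^ r
      = ∑ s ∈ Finset.range (n+1), (s:ℝ) * (alphaCoef n m (s:ℤ) : ℝ) * y ^ (s-1) / x ^ ((m+1) : ℤ) := by
    intro m r hm
    calc ∑ s ∈ Finset.range (n+2), ((s:ℝ)+1) * (alphaCoef n m ((s:ℤ)+1) : ℝ) * y ^ s / x ^ r
        = ∑ s ∈ Finset.range (n+2),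
            (fun q : ℤ => (q:ℝ) * (alphaCoef n m q : ℝ) * y ^ ((q-1):ℤ) / x ^ r) ((s:ℤ) + 1) := by
          refine Finset.sum_congr rfl fun s _ => ?_
          simp only
          rw [show ((s:ℤ) + 1 - 1) = ((s:ℕ):ℤ) by omega, zpow_natCast]
          norm_num
      _ = ∑ s ∈ Finset.range (n+1),
            (fun q : ℤ => (q:ℝ) * (alphaCoef n m q : ℝ) * y ^ ((q-1):ℤ) / x ^ r) (s:ℤ) := by
          refine sum_shift_neg (fun q : ℤ => (q:ℝ) * (alphaCoef n m q : ℝ) * y ^ ((q-1):ℤ) / x ^ r)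
            (n+1) (n+2) (by omega) (by simp) ?_
          · intro q hq
            rw [alphaCoef_vanish n m q (by right; right; right; omega)]; simp
      _ = ∑ s ∈ Finset.range (n+1), (s:ℝ) * (alphaCoef n m (s:ℤ) : ℝ) * y ^ (s-1) / x ^ ((m+1) : ℤ) := by
          refine Finset.sum_congr rfl fun s _ => ?_
          simp only
          rw [hm, zpow_natCast]
          rcases s with _ | s
          · simp
          · rw [show (((s+1:ℕ):ℤ) - 1) = ((s:ℕ):ℤ) by omega, zpow_natCast,
              show (s+1) - 1 = s from rfl]
            norm_num
  calc (∑ r ∈ Finset.range (2*n+3), ∑ s ∈ Finset.range (n+2),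
        ((s:ℝ)+1) * (alphaCoef n ((r:ℤ)-1) ((s:ℤ)+1) : ℝ) * y ^ s / x ^ r)
      = ∑ r ∈ Finset.range (2*n+3),
          (fun m : ℤ => ∑ s ∈ Finset.range (n+1),
            (s:ℝ) * (alphaCoef n m (s:ℤ) : ℝ) * y ^ (s-1) / x ^ ((m+1):ℤ)) ((r:ℤ) - (1:ℕ)) := by
        refine Finset.sum_congr rfl fun r _ => ?_
        exact step1 ((r:ℤ)-1) r (by omega)
    _ = ∑ r ∈ Finset.range (2*n+1),
          (fun m : ℤ => ∑ s ∈ Finset.range (n+1),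
            (s:ℝ) * (alphaCoef n m (s:ℤ) : ℝ) * y ^ (s-1) / x ^ ((m+1):ℤ)) (r:ℤ) := by
        refine sum_shift (fun m : ℤ => ∑ s ∈ Finset.range (n+1),
            (s:ℝ) * (alphaCoef n m (s:ℤ) : ℝ) * y ^ (s-1) / x ^ ((m+1):ℤ)) 1 (2*n+1) (2*n+3)
            (by omega) ?_ ?_
        · intro m hm
          refine Finset.sum_eq_zero fun s _ => ?_
          rw [alphaCoef_vanish n m s (by omega)]; simp
        · intro m hm
          refine Finset.sum_eq_zero fun s _ => ?_
          rw [alphaCoef_vanish n m s (by right; right; left; push_cast at hm ⊢; omega)]; simp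
    _ = ∑ r ∈ Finset.range (2*n+1), ∑ s ∈ Finset.range (n+1),
        (s:ℝ) * (alphaCoef n (r:ℤ) (s:ℤ) : ℝ) * y ^ (s-1) / x ^ (r+1) := by
        refine Finset.sum_congr rfl fun r _ => Finset.sum_congr rfl fun s _ => ?_
        rw [show ((r:ℤ)+1) = ((r+1:ℕ):ℤ) by omega, zpow_natCast]

lemma T4eq (n : ℕ) (x y : ℝ) :
    (∑ r ∈ Finset.range (2*n+3), ∑ s ∈ Finset.range (n+2),
      ((r:ℝ)-1) * (alphaCoef n ((r:ℤ)-1) (s:ℤ) : ℝ) * y ^ s / x ^ r)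
    = ∑ r ∈ Finset.range (2*n+1), ∑ s ∈ Finset.range (n+1),
      (r:ℝ) * (alphaCoef n (r:ℤ) (s:ℤ) : ℝ) * y ^ s / x ^ (r+1) := by
  have step1 : ∀ m : ℤ, ∀ r : ℕ, (m + 1 = (r:ℤ)) →
      ∑ s ∈ Finset.range (n+2), ((r:ℝ)-1) * (alphaCoef n m (s:ℤ) : ℝ) * y ^ s / x ^ r
      = ∑ s ∈ Finset.range (n+1), ((m:ℤ):ℝ) * (alphaCoef n m (s:ℤ) : ℝ) * y ^ s / x ^ ((m+1) : ℤ) := by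
    intro m r hm
    rw [sum_drop (n+1) _ (by
      rw [alphaCoef_vanish n m ((n+1:ℕ):ℤ) (by right; right; right; push_cast; omega)]
      simp)]
    refine Finset.sum_congr rfl fun s _ => ?_
    rw [hm, zpow_natCast]
    have : ((m:ℤ):ℝ) = (r:ℝ) - 1 := by
      rw [show m = (r:ℤ) - 1 by omega]; push_cast; ring
    rw [this]
  calc (∑ r ∈ Finset.range (2*n+3), ∑ s ∈ Finset.range (n+2),
        ((r:ℝ)-1) * (alphaCoef n ((r:ℤ)-1) (s:ℤ) : ℝ) * y ^ s / x ^ r)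
      = ∑ r ∈ Finset.range (2*n+3),
          (fun m : ℤ => ∑ s ∈ Finset.range (n+1),
            ((m:ℤ):ℝ) * (alphaCoef n m (s:ℤ) : ℝ) * y ^ s / x ^ ((m+1):ℤ)) ((r:ℤ) - (1:ℕ)) := by
        refine Finset.sum_congr rfl fun r _ => ?_
        exact step1 ((r:ℤ)-1) r (by omega)
    _ = ∑ r ∈ Finset.range (2*n+1),
          (fun m : ℤ => ∑ s ∈ Finset.range (n+1),
            ((m:ℤ):ℝ) * (alphaCoef n m (s:ℤ) : ℝ) * y ^ s / x ^ ((m+1):ℤ)) (r:ℤ) := by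
        refine sum_shift (fun m : ℤ => ∑ s ∈ Finset.range (n+1),
            ((m:ℤ):ℝ) * (alphaCoef n m (s:ℤ) : ℝ) * y ^ s / x ^ ((m+1):ℤ)) 1 (2*n+1) (2*n+3)
            (by omega) ?_ ?_
        · intro m hm
          refine Finset.sum_eq_zero fun s _ => ?_
          rw [alphaCoef_vanish n m s (by omega)]; simp
        · intro m hm
          refine Finset.sum_eq_zero fun s _ => ?_
          rw [alphaCoef_vanish n m s (by right; right; left; push_cast at hm ⊢; omega)]; simp
    _ = ∑ r ∈ Finset.range (2*n+1), ∑ s ∈ Finset.range (n+1),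
        (r:ℝ) * (alphaCoef n (r:ℤ) (s:ℤ) : ℝ) * y ^ s / x ^ (r+1) := by
        refine Finset.sum_congr rfl fun r _ => Finset.sum_congr rfl fun s _ => ?_
        rw [show ((r:ℤ)+1) = ((r+1:ℕ):ℤ) by omega, zpow_natCast]
        norm_num

lemma sum_step (n : ℕ) (x y : ℝ) (hx : x ≠ 0) :
    (∑ r ∈ Finset.range (2*(n+1)+1), ∑ s ∈ Finset.range ((n+1)+1),
        (alphaCoef (n+1) (r:ℤ) (s:ℤ) : ℝ) * y ^ s / x ^ r)
    = (1 - y)/x^2 * (∑ r ∈ Finset.range (2*n+1), ∑ s ∈ Finset.range (n+1),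
        (alphaCoef n (r:ℤ) (s:ℤ) : ℝ) * y ^ s / x ^ r)
      + ∑ r ∈ Finset.range (2*n+1), ∑ s ∈ Finset.range (n+1),
        (alphaCoef n (r:ℤ) (s:ℤ) : ℝ) * (((s:ℝ) * y^(s-1) - (r:ℝ) * y^s) / x^(r+1)) := by
  have hrec : ∀ r s : ℕ, (alphaCoef (n+1) (r:ℤ) (s:ℤ) : ℝ)
      = (alphaCoef n ((r:ℤ)-2) (s:ℤ) : ℝ) - (alphaCoef n ((r:ℤ)-2) ((s:ℤ)-1) : ℝ)
        + ((s:ℝ)+1) * (alphaCoef n ((r:ℤ)-1) ((s:ℤ)+1) : ℝ)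
        - ((r:ℝ)-1) * (alphaCoef n ((r:ℤ)-1) (s:ℤ) : ℝ) := by
    intro r s
    simp only [alphaCoef]
    rw [if_neg (by omega)]
    push_cast
    ring
  have hL : (∑ r ∈ Finset.range (2*(n+1)+1), ∑ s ∈ Finset.range ((n+1)+1),
        (alphaCoef (n+1) (r:ℤ) (s:ℤ) : ℝ) * y ^ s / x ^ r)
      = (∑ r ∈ Finset.range (2*n+3), ∑ s ∈ Finset.range (n+2),
          (alphaCoef n ((r:ℤ)-2) (s:ℤ) : ℝ) * y ^ s / x ^ r)
        - (∑ r ∈ Finset.range (2*n+3), ∑ s ∈ Finset.range (n+2),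
          (alphaCoef n ((r:ℤ)-2) ((s:ℤ)-1) : ℝ) * y ^ s / x ^ r)
        + (∑ r ∈ Finset.range (2*n+3), ∑ s ∈ Finset.range (n+2),
          ((s:ℝ)+1) * (alphaCoef n ((r:ℤ)-1) ((s:ℤ)+1) : ℝ) * y ^ s / x ^ r)
        - (∑ r ∈ Finset.range (2*n+3), ∑ s ∈ Finset.range (n+2),
          ((r:ℝ)-1) * (alphaCoef n ((r:ℤ)-1) (s:ℤ) : ℝ) * y ^ s / x ^ r) := by
    rw [show 2*(n+1)+1 = 2*n+3 by omega, show (n+1)+1 = n+2 by omega]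
    simp only [hrec, sub_mul, add_mul, sub_div, add_div, Finset.sum_add_distrib,
      Finset.sum_sub_distrib]
  rw [hL, T1eq, T2eq, T3eq, T4eq]
  simp only [Finset.mul_sum]
  simp only [← Finset.sum_sub_distrib, ← Finset.sum_add_distrib]
  refine Finset.sum_congr rfl fun r _ => ?_
  refine Finset.sum_congr rfl fun s _ => ?_
  field_simp
  ring

noncomputable def gSum (n : ℕ) (x : ℝ) : ℝ :=
  ∑ r ∈ Finset.range (2*n+1), ∑ s ∈ Finset.range (n+1),
    (alphaCoef n (r:ℤ) (s:ℤ) : ℝ) * Real.log x ^ s / x ^ r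

lemma hasDerivAt_term (r s : ℕ) (x : ℝ) (hx : 0 < x) :
    HasDerivAt (fun t => Real.log t ^ s / t ^ r)
      (((s:ℝ) * Real.log x ^ (s-1) - (r:ℝ) * Real.log x ^ s) / x ^ (r+1)) x := by
  have h1 : HasDerivAt (fun t => Real.log t ^ s) ((s:ℝ) * Real.log x ^ (s-1) * x⁻¹) x :=
    (Real.hasDerivAt_log hx.ne').pow s
  have h2 : HasDerivAt (fun t : ℝ => t ^ r) ((r:ℝ) * x ^ (r-1)) x := hasDerivAt_pow r x
  have h := h1.fun_div h2 (pow_ne_zero r hx.ne')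
  refine h.congr_deriv (Eq.symm ?_)
  rcases r with _ | r
  · simp
    field_simp
  · rw [show (r+1) - 1 = r from rfl]
    field_simp
    ring

lemma keyDeriv (n : ℕ) (x : ℝ) (hx : 0 < x) :
    HasDerivAt (fun t => Real.exp (Real.log t / t) * gSum n t)
      (Real.exp (Real.log x / x) * gSum (n+1) x) x := by
  have hE : HasDerivAt (fun t : ℝ => Real.exp (Real.log t / t))
      (Real.exp (Real.log x / x) * ((1 - Real.log x)/x^2)) x := by
    have h1 : HasDerivAt (fun t : ℝ => Real.log t / t) ((1 - Real.log x)/x^2) x := by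
      have h := (Real.hasDerivAt_log hx.ne').fun_div (hasDerivAt_id' x) hx.ne'
      refine h.congr_deriv (Eq.symm ?_)
      field_simp
    exact h1.exp
  have hG : HasDerivAt (fun t => gSum n t)
      (∑ r ∈ Finset.range (2*n+1), ∑ s ∈ Finset.range (n+1),
        (alphaCoef n (r:ℤ) (s:ℤ) : ℝ) *
          (((s:ℝ) * Real.log x ^ (s-1) - (r:ℝ) * Real.log x ^ s) / x ^ (r+1))) x := by
    have hfun : (fun t => gSum n t) = fun t => ∑ r ∈ Finset.range (2*n+1),
        ∑ s ∈ Finset.range (n+1), (alphaCoef n (r:ℤ) (s:ℤ) : ℝ) * (Real.log t ^ s / t ^ r) := by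
      funext t
      simp [gSum, mul_div_assoc]
    rw [hfun]
    refine HasDerivAt.fun_sum fun r _ => HasDerivAt.fun_sum fun s _ => ?_
    exact (hasDerivAt_term r s x hx).const_mul _
  have h := hE.fun_mul hG
  refine h.congr_deriv (Eq.symm ?_)
  have hstep := sum_step n x (Real.log x) hx.ne'
  show Real.exp (Real.log x / x) * gSum (n+1) x = _
  rw [gSum, show 2*(n+1)+1 = 2*(n+1)+1 from rfl]
  rw [hstep]
  rw [gSum]
  ring

lemma key (n : ℕ) : ∀ x : ℝ, 0 < x →
    iteratedDeriv n (fun t : ℝ => Real.exp (Real.log t / t)) x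
      = Real.exp (Real.log x / x) * gSum n x := by
  induction n with
  | zero =>
    intro x hx
    simp [iteratedDeriv_zero, gSum, alphaCoef]
  | succ n ih =>
    intro x hx
    rw [iteratedDeriv_succ]
    have hev : (iteratedDeriv n fun t : ℝ => Real.exp (Real.log t / t))
        =ᶠ[nhds x] (fun t => Real.exp (Real.log t / t) * gSum n t) := by
      filter_upwards [isOpen_Ioi.mem_nhds hx] with t ht using ih t ht
    rw [hev.deriv_eq, (keyDeriv n x hx).deriv]


/-- For every `n ∈ ℕ` and real `x > 0`, the `n`-th derivative of `f x = x^(1/x)` equals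
`x^(1/x) · Σ_{r=0}^{2n} Σ_{s=0}^{n} α(n,r,s) (ln x)^s / x^r`. -/
theorem iteratedDeriv_self_rpow_inv_self (n : ℕ) (x : ℝ) (hx : 0 < x) :
    iteratedDeriv n (fun t : ℝ => Real.exp (Real.log t / t)) x =
      Real.exp (Real.log x / x) *
        ∑ r ∈ Finset.range (2 * n + 1), ∑ s ∈ Finset.range (n + 1),
          (alphaCoef n r s : ℝ) * Real.log x ^ s / x ^ r := by
  rw [key n x hx, gSum]
end

section
/- For every integer m ≥ 1, ∫_{ln m}^∞ (1 − z) · e^{iπ·exp(z)} · exp(z·e^{−z} − z) dz = (i·(−1)^m/π) · m^(1/m) · (1 − ln m)/m² + (i/π) · ∫_{ln m}^∞ e^{iπ·exp(z)} · exp(z·e^{−z} − 2z) · [2z − 3 + e^{−z}·(1 − 2z + z²)] dz, both improper integrals being convergent. -/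
open MeasureTheory Set Filter Topology

noncomputable section ExpScaledAux

private def EP (z : ℝ) : ℂ := Complex.exp ((Real.pi : ℂ) * Complex.I * (Real.exp z : ℂ))

private def F1 (z : ℝ) : ℂ :=
  (((1 - z : ℝ)) : ℂ) * EP z * (Real.exp (z * Real.exp (-z) - z) : ℂ)

private def F2 (z : ℝ) : ℂ :=
  EP z * (Real.exp (z * Real.exp (-z) - 2 * z) : ℂ) *
    (((2 * z - 3 + Real.exp (-z) * (1 - 2 * z + z ^ 2) : ℝ)) : ℂ)

private def G (z : ℝ) : ℂ :=
  ((Real.pi : ℂ) * Complex.I)⁻¹ *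
    (((1 - z : ℝ) : ℂ) * ((Real.exp (z * Real.exp (-z) - 2 * z) : ℝ) : ℂ) * EP z)

private lemma norm_EP (z : ℝ) : ‖EP z‖ = 1 := by
  simp [EP, Complex.norm_exp]

private lemma z_exp_le (z : ℝ) (hz : 0 ≤ z) : z * Real.exp (-z) ≤ 1 := by
  have h1 := Real.add_one_le_exp z
  have h2 : Real.exp z * Real.exp (-z) = 1 := by
    rw [← Real.exp_add]; simp
  have h3 := Real.exp_pos (-z)
  nlinarith

private lemma one_add_le (z : ℝ) (hz : 0 ≤ z) : 1 + z ≤ 2 * Real.exp (z / 2) := by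
  have := Real.add_one_le_exp (z / 2)
  nlinarith

private lemma norm_F1_le {z : ℝ} (hz : 0 ≤ z) :
    ‖F1 z‖ ≤ 2 * Real.exp 1 * Real.exp (-(1/2) * z) := by
  have h0 : ‖F1 z‖ = |1 - z| * Real.exp (z * Real.exp (-z) - z) := by
    simp only [F1, norm_mul, norm_EP, Complex.norm_real, Real.norm_eq_abs,
      abs_of_pos (Real.exp_pos _), mul_one, one_mul]
  rw [h0]
  have h1 : |1 - z| ≤ 2 * Real.exp (z / 2) := by
    rw [abs_le]
    have := one_add_le z hz
    constructor <;> nlinarith [Real.exp_pos (z/2)]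
  have h2 : Real.exp (z * Real.exp (-z) - z) ≤ Real.exp (1 - z) :=
    Real.exp_le_exp.2 (by have := z_exp_le z hz; linarith)
  calc |1 - z| * Real.exp (z * Real.exp (-z) - z)
      ≤ (2 * Real.exp (z / 2)) * Real.exp (1 - z) :=
        mul_le_mul h1 h2 (Real.exp_pos _).le (by positivity)
    _ = 2 * Real.exp 1 * Real.exp (-(1/2) * z) := by
        rw [mul_assoc, ← Real.exp_add, mul_assoc, ← Real.exp_add]
        congr 1; ring

private lemma norm_F2_le {z : ℝ} (hz : 0 ≤ z) :
    ‖F2 z‖ ≤ 4 * Real.exp 1 * Real.exp (-(1/2) * z) := by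
  have h0 : ‖F2 z‖ = Real.exp (z * Real.exp (-z) - 2 * z) *
      |2 * z - 3 + Real.exp (-z) * (1 - 2 * z + z ^ 2)| := by
    simp only [F2, norm_mul, norm_EP, Complex.norm_real, Real.norm_eq_abs,
      abs_of_pos (Real.exp_pos _), one_mul]
  rw [h0]
  have he1 : Real.exp (-z) ≤ 1 := Real.exp_le_one_iff.2 (by linarith)
  have he0 : (0:ℝ) < Real.exp (-z) := Real.exp_pos _
  have h1 : |2 * z - 3 + Real.exp (-z) * (1 - 2 * z + z ^ 2)| ≤ (z + 2) ^ 2 := by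
    rw [abs_le]
    constructor <;> nlinarith [sq_nonneg (z - 1), sq_nonneg z]
  have h2 : Real.exp (z * Real.exp (-z) - 2 * z) ≤ Real.exp (1 - 2 * z) :=
    Real.exp_le_exp.2 (by have := z_exp_le z hz; linarith)
  have h3 : (z + 2) ^ 2 ≤ 4 * Real.exp z := by
    have h4 := Real.add_one_le_exp (z / 2)
    have h5 : Real.exp (z/2) * Real.exp (z/2) = Real.exp z := by
      rw [← Real.exp_add]; congr 1; ring
    nlinarith [Real.exp_pos (z/2), sq_nonneg (2 * Real.exp (z/2) - (z + 2))]
  calc Real.exp (z * Real.exp (-z) - 2 * z) *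
        |2 * z - 3 + Real.exp (-z) * (1 - 2 * z + z ^ 2)|
      ≤ Real.exp (1 - 2 * z) * (4 * Real.exp z) :=
        mul_le_mul h2 (h1.trans h3) (abs_nonneg _) (Real.exp_pos _).le
    _ = 4 * Real.exp 1 * Real.exp (-z) := by
        have h6 : Real.exp (1 - 2 * z) * Real.exp z = Real.exp 1 * Real.exp (-z) := by
          rw [← Real.exp_add, ← Real.exp_add]; congr 1; ring
        nlinarith [h6]
    _ ≤ 4 * Real.exp 1 * Real.exp (-(1/2) * z) := by
        have : Real.exp (-z) ≤ Real.exp (-(1/2) * z) := Real.exp_le_exp.2 (by linarith)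
        nlinarith [Real.exp_pos (1:ℝ)]

private lemma contEP : Continuous EP := by
  unfold EP; fun_prop

private lemma intF1 {a : ℝ} (ha : 0 ≤ a) : IntegrableOn F1 (Ioi a) := by
  apply Integrable.mono'
    (((exp_neg_integrableOn_Ioi a (by norm_num : (0:ℝ) < 1/2))).const_mul (2 * Real.exp 1))
  · exact ((Continuous.mul (by fun_prop) contEP).mul (by fun_prop)).aestronglyMeasurable.restrict
  · filter_upwards [ae_restrict_mem measurableSet_Ioi] with z hz
    exact norm_F1_le (ha.trans (le_of_lt hz))

private lemma intF2 {a : ℝ} (ha : 0 ≤ a) : IntegrableOn F2 (Ioi a) := by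
  apply Integrable.mono'
    (((exp_neg_integrableOn_Ioi a (by norm_num : (0:ℝ) < 1/2))).const_mul (4 * Real.exp 1))
  · exact ((contEP.mul (by fun_prop)).mul (by fun_prop)).aestronglyMeasurable.restrict
  · filter_upwards [ae_restrict_mem measurableSet_Ioi] with z hz
    exact norm_F2_le (ha.trans (le_of_lt hz))

private lemma hasDerivAt_G (z : ℝ) :
    HasDerivAt G (F1 z + ((Real.pi : ℂ) * Complex.I)⁻¹ * F2 z) z := by
  have hGeq : G = fun w : ℝ => ((Real.pi : ℂ) * Complex.I)⁻¹ *
      ((1 - (w:ℂ)) * Complex.exp ((w:ℂ) * Complex.exp (-(w:ℂ)) - 2 * (w:ℂ)) * EP w) := by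
    funext w
    simp only [G, EP]
    push_cast [Complex.ofReal_exp]
    ring_nf
  rw [hGeq]
  have hid : HasDerivAt (fun w : ℝ => (w:ℂ)) 1 z := (hasDerivAt_id z).ofReal_comp
  have hne : HasDerivAt (fun w : ℝ => Complex.exp (-(w:ℂ))) (-Complex.exp (-(z:ℂ))) z := by
    simpa using hid.neg.cexp
  have hS : HasDerivAt (fun w : ℝ => (w:ℂ) * Complex.exp (-(w:ℂ)) - 2 * (w:ℂ))
      (Complex.exp (-(z:ℂ)) + (z:ℂ) * -Complex.exp (-(z:ℂ)) - 2) z := by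
    exact ((hid.mul hne).sub (hid.const_mul 2)).congr_deriv (by ring)
  have hES := hS.cexp
  have hT : HasDerivAt (fun w : ℝ => (Real.pi : ℂ) * Complex.I * ((Real.exp w : ℝ) : ℂ))
      ((Real.pi : ℂ) * Complex.I * ((Real.exp z : ℝ) : ℂ)) z := by
    simpa using ((Real.hasDerivAt_exp z).ofReal_comp).const_mul ((Real.pi : ℂ) * Complex.I)
  have hET : HasDerivAt EP
      (Complex.exp ((Real.pi : ℂ) * Complex.I * ((Real.exp z : ℝ) : ℂ)) *
        ((Real.pi : ℂ) * Complex.I * ((Real.exp z : ℝ) : ℂ))) z := hT.cexp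
  have h1 : HasDerivAt (fun w : ℝ => 1 - (w:ℂ)) (-1) z := by
    simpa using hid.const_sub 1
  have hprod := ((h1.mul hES).mul hET).const_mul (((Real.pi : ℂ) * Complex.I)⁻¹)
  refine HasDerivAt.congr_deriv hprod (Eq.symm ?_)
  -- now a pure algebra identity
  simp only [F1, F2, EP, Pi.mul_apply]
  push_cast [Complex.ofReal_exp]
  have e4 : Complex.exp ((z:ℂ) * Complex.exp (-(z:ℂ)) - (z:ℂ)) =
      Complex.exp ((z:ℂ) * Complex.exp (-(z:ℂ)) - 2 * (z:ℂ)) * Complex.exp (z:ℂ) := by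
    rw [← Complex.exp_add]; congr 1; ring
  rw [e4]
  have hπ : (Real.pi : ℂ) ≠ 0 := Complex.ofReal_ne_zero.2 Real.pi_ne_zero
  have hI : Complex.I ≠ 0 := Complex.I_ne_zero
  field_simp
  ring

private lemma tendsto_G : Tendsto G atTop (𝓝 0) := by
  rw [tendsto_zero_iff_norm_tendsto_zero]
  have hbound : ∀ᶠ z in atTop, ‖G z‖ ≤
      ‖((Real.pi : ℂ) * Complex.I)⁻¹‖ * (2 * Real.exp 1) * Real.exp (-z) := by
    filter_upwards [eventually_ge_atTop (0:ℝ)] with z hz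
    have h0 : ‖G z‖ = ‖((Real.pi : ℂ) * Complex.I)⁻¹‖ *
        (|1 - z| * Real.exp (z * Real.exp (-z) - 2 * z)) := by
      simp only [G, norm_mul, norm_EP, Complex.norm_real, Real.norm_eq_abs,
        abs_of_pos (Real.exp_pos _), mul_one]
    rw [h0]
    have h1 : |1 - z| ≤ 2 * Real.exp (z / 2) := by
      rw [abs_le]
      have := one_add_le z hz
      constructor <;> nlinarith [Real.exp_pos (z/2)]
    have h2 : Real.exp (z * Real.exp (-z) - 2 * z) ≤ Real.exp (1 - 2 * z) :=
      Real.exp_le_exp.2 (by have := z_exp_le z hz; linarith)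
    have h3 : |1 - z| * Real.exp (z * Real.exp (-z) - 2 * z) ≤
        (2 * Real.exp (z / 2)) * Real.exp (1 - 2 * z) :=
      mul_le_mul h1 h2 (Real.exp_pos _).le (by positivity)
    have h4 : (2 * Real.exp (z / 2)) * Real.exp (1 - 2 * z) ≤ 2 * Real.exp 1 * Real.exp (-z) := by
      rw [mul_assoc, ← Real.exp_add, mul_assoc, ← Real.exp_add]
      have : Real.exp (z / 2 + (1 - 2 * z)) ≤ Real.exp (1 + -z) :=
        Real.exp_le_exp.2 (by linarith)
      linarith
    calc ‖((Real.pi : ℂ) * Complex.I)⁻¹‖ *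
        (|1 - z| * Real.exp (z * Real.exp (-z) - 2 * z))
        ≤ ‖((Real.pi : ℂ) * Complex.I)⁻¹‖ * (2 * Real.exp 1 * Real.exp (-z)) := by
          apply mul_le_mul_of_nonneg_left (h3.trans h4) (norm_nonneg _)
      _ = ‖((Real.pi : ℂ) * Complex.I)⁻¹‖ * (2 * Real.exp 1) * Real.exp (-z) := by ring
  have hlim : Tendsto (fun z : ℝ => ‖((Real.pi : ℂ) * Complex.I)⁻¹‖ * (2 * Real.exp 1) *
      Real.exp (-z)) atTop (𝓝 0) := by
    have := Real.tendsto_exp_neg_atTop_nhds_zero.const_mul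
      (‖((Real.pi : ℂ) * Complex.I)⁻¹‖ * (2 * Real.exp 1))
    simpa using this
  exact squeeze_zero' (Eventually.of_forall fun z => norm_nonneg _) hbound hlim

end ExpScaledAux

/-- For every integer `m ≥ 1`, partial integration gives
`∫_{ln m}^∞ (1-z) e^{iπ e^z} e^{z e^{-z} - z} dz
  = (i(-1)^m/π) m^(1/m) (1 - ln m)/m²
    + (i/π) ∫_{ln m}^∞ e^{iπ e^z} e^{z e^{-z} - 2z} [2z - 3 + e^{-z}(1 - 2z + z²)] dz`,
both improper integrals being convergent. -/
theorem exp_scaled_partial_integration (m : ℤ) (hm : 1 ≤ m) :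
    IntegrableOn
      (fun z : ℝ => (((1 - z : ℝ)) : ℂ) *
        Complex.exp ((Real.pi : ℂ) * Complex.I * (Real.exp z : ℂ)) *
        (Real.exp (z * Real.exp (-z) - z) : ℂ))
      (Set.Ioi (Real.log m)) ∧
    IntegrableOn
      (fun z : ℝ => Complex.exp ((Real.pi : ℂ) * Complex.I * (Real.exp z : ℂ)) *
        (Real.exp (z * Real.exp (-z) - 2 * z) : ℂ) *
        (((2 * z - 3 + Real.exp (-z) * (1 - 2 * z + z ^ 2) : ℝ)) : ℂ))
      (Set.Ioi (Real.log m)) ∧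
    (∫ z in Set.Ioi (Real.log m),
        (((1 - z : ℝ)) : ℂ) *
          Complex.exp ((Real.pi : ℂ) * Complex.I * (Real.exp z : ℂ)) *
          (Real.exp (z * Real.exp (-z) - z) : ℂ)) =
      (Complex.I * (-1 : ℂ) ^ m / (Real.pi : ℂ)) *
          (Real.exp (Real.log m / m) : ℂ) * (((1 - Real.log m) / (m : ℝ) ^ 2 : ℝ) : ℂ) +
        (Complex.I / (Real.pi : ℂ)) *
          ∫ z in Set.Ioi (Real.log m),
            Complex.exp ((Real.pi : ℂ) * Complex.I * (Real.exp z : ℂ)) *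
              (Real.exp (z * Real.exp (-z) - 2 * z) : ℂ) *
              (((2 * z - 3 + Real.exp (-z) * (1 - 2 * z + z ^ 2) : ℝ)) : ℂ) := by
  have hm1 : (1:ℝ) ≤ (m:ℝ) := by exact_mod_cast hm
  have hmpos : (0:ℝ) < (m:ℝ) := by linarith
  set a := Real.log (m:ℝ) with ha_def
  have ha : 0 ≤ a := Real.log_nonneg hm1
  have hi1 : IntegrableOn F1 (Ioi a) := intF1 ha
  have hi2 : IntegrableOn F2 (Ioi a) := intF2 ha
  refine ⟨hi1, hi2, ?_⟩
  have key : (∫ z in Ioi a, (F1 z + ((Real.pi : ℂ) * Complex.I)⁻¹ * F2 z)) = 0 - G a :=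
    integral_Ioi_of_hasDerivAt_of_tendsto' (fun x _ => hasDerivAt_G x)
      (hi1.add (hi2.const_mul _)) tendsto_G
  rw [integral_add hi1 (hi2.const_mul _), integral_const_mul] at key
  have hπ : (Real.pi : ℂ) ≠ 0 := Complex.ofReal_ne_zero.2 Real.pi_ne_zero
  have hF1eq : (∫ z in Ioi a, F1 z) =
      -G a + (Complex.I / (Real.pi : ℂ)) * ∫ z in Ioi a, F2 z := by
    have hc : -(((Real.pi : ℂ) * Complex.I)⁻¹) = Complex.I / (Real.pi : ℂ) := by
      rw [mul_inv, Complex.inv_I]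
      field_simp
    rw [← hc]
    linear_combination key
  -- evaluate G a
  have hexp_a : Real.exp a = (m:ℝ) := Real.exp_log hmpos
  have hexp_na : Real.exp (-a) = (m:ℝ)⁻¹ := by rw [Real.exp_neg, hexp_a]
  have hEP : EP a = (-1 : ℂ) ^ m := by
    have : ((Real.exp a : ℝ) : ℂ) = ((m:ℤ) : ℂ) := by rw [hexp_a]; push_cast; ring
    rw [EP, this, mul_comm ((Real.pi : ℂ) * Complex.I), Complex.exp_int_mul,
      Complex.exp_pi_mul_I]
  have hexp_val : Real.exp (a * Real.exp (-a) - 2 * a) =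
      Real.exp (a / (m:ℝ)) * ((m:ℝ) ^ 2)⁻¹ := by
    rw [hexp_na, Real.exp_sub]
    rw [show a * ((m:ℝ))⁻¹ = a / (m:ℝ) from (div_eq_mul_inv a _).symm]
    rw [show (2:ℝ) * a = a + a from two_mul a, Real.exp_add, hexp_a]
    rw [div_eq_mul_inv]
    congr 1
    rw [sq]
  have hGa : -G a = (Complex.I * (-1 : ℂ) ^ m / (Real.pi : ℂ)) *
      (Real.exp (Real.log m / m) : ℂ) * (((1 - Real.log m) / (m : ℝ) ^ 2 : ℝ) : ℂ) := by
    rw [G, hEP, hexp_val]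
    have hm0 : ((m:ℝ) : ℂ) ≠ 0 := Complex.ofReal_ne_zero.2 (ne_of_gt hmpos)
    have hI : Complex.I ≠ 0 := Complex.I_ne_zero
    have hdiv : a / (m:ℝ) = Real.log (m:ℝ) / (m:ℝ) := by rw [ha_def]
    rw [hdiv, mul_inv, Complex.inv_I]
    push_cast
    ring
  rw [show (∫ z in Ioi a,
        (((1 - z : ℝ)) : ℂ) *
          Complex.exp ((Real.pi : ℂ) * Complex.I * (Real.exp z : ℂ)) *
          (Real.exp (z * Real.exp (-z) - z) : ℂ)) = ∫ z in Ioi a, F1 z from rfl]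
  rw [hF1eq, hGa]
  rfl
end

section
/- Let m be an integer and let g : ℝ → ℝ be integrable on [m, ∞) (i.e. ∫_m^∞ |g(x)| dx < ∞). Then ∫_m^∞ e^{iπx} · g(x) dx = (−1)^m · ∫₀¹ e^{iπy} · (Σ_{l=0}^∞ (−1)^l · g(m + l + y)) dy, where for almost every y ∈ [0,1] the series Σ_{l=0}^∞ (−1)^l g(m+l+y) converges absolutely and the function y ↦ Σ_{l=0}^∞ (−1)^l g(m+l+y) is integrable on [0,1]. -/
open MeasureTheory Filter

section helpers

variable {E : Type*} [NormedAddCommGroup E] [NormedSpace ℝ E]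

/-- Translation of a set integral over `Ico c (c+1)` to `Ioc 0 1`. -/
private lemma shift_integral (f : ℝ → E) (c : ℝ) :
    (∫ y in Set.Ioc (0 : ℝ) 1, f (c + y)) = ∫ x in Set.Ico c (c + 1), f x := by
  rw [setIntegral_congr_set Ico_ae_eq_Ioc,
    ← intervalIntegral.integral_of_le (by linarith : c ≤ c + 1),
    ← intervalIntegral.integral_of_le (zero_le_one' ℝ)]
  simpa using intervalIntegral.integral_comp_add_left f c (a := 0) (b := 1)

private lemma my_integrable_tsum {μ : Measure ℝ} {f : ℕ → ℝ → ℝ}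
    (hf : ∀ i, AEStronglyMeasurable (f i) μ)
    (hf' : ∑' i, ∫⁻ a, ‖f i a‖₊ ∂μ ≠ ⊤) :
    Integrable (fun a => ∑' i, f i a) μ := by
  have hmeas : ∀ i, AEMeasurable (fun x => (‖f i x‖₊ : ENNReal)) μ := fun i => (hf i).enorm
  have hlt : ∀ᵐ a ∂μ, ∑' i, (‖f i a‖₊ : ENNReal) < ⊤ := by
    refine ae_lt_top' (AEMeasurable.ennreal_tsum hmeas) ?_
    rwa [lintegral_tsum hmeas]
  have hsumn : ∀ᵐ a ∂μ, Summable fun i => ‖f i a‖₊ := by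
    filter_upwards [hlt] with a ha
    exact ENNReal.tsum_coe_ne_top_iff_summable.mp ha.ne
  have hsum : ∀ᵐ a ∂μ, Summable fun i => f i a := by
    filter_upwards [hsumn] with a ha
    exact Summable.of_nnnorm ha
  constructor
  · refine aestronglyMeasurable_of_tendsto_ae atTop
      (fun n => Finset.aestronglyMeasurable_sum (Finset.range n) fun i _ => hf i) ?_
    filter_upwards [hsum] with a ha
    simpa only [Finset.sum_apply] using ha.hasSum.tendsto_sum_nat
  · refine lt_of_le_of_lt (lintegral_mono_ae (g := fun a => ∑' i, (‖f i a‖₊ : ENNReal)) ?_) ?_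
    · filter_upwards [hsumn] with a ha
      calc (‖∑' i, f i a‖₊ : ENNReal) ≤ ((∑' i, ‖f i a‖₊ : NNReal) : ENNReal) := by
            exact_mod_cast nnnorm_tsum_le ha
        _ = ∑' i, (‖f i a‖₊ : ENNReal) := ENNReal.coe_tsum ha
    · rw [lintegral_tsum hmeas]
      exact hf'.lt_top

end helpers

set_option maxHeartbeats 1000000 in
/-- Longman's method. -/
theorem longman_alternating_series (m : ℤ) (g : ℝ → ℝ)
    (hg : IntegrableOn g (Set.Ici (m : ℝ))) :
    (∀ᵐ y : ℝ, y ∈ Set.Icc (0 : ℝ) 1 →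
      Summable (fun l : ℕ => |g ((m : ℝ) + l + y)|)) ∧
    IntegrableOn (fun y : ℝ => ∑' l : ℕ, (-1 : ℝ) ^ l * g ((m : ℝ) + l + y))
      (Set.Icc (0 : ℝ) 1) ∧
    (∫ x in Set.Ici (m : ℝ),
        Complex.exp ((Real.pi : ℂ) * Complex.I * (x : ℂ)) * (g x : ℂ)) =
      (-1 : ℂ) ^ m *
        ∫ y in (0 : ℝ)..1,
          Complex.exp ((Real.pi : ℂ) * Complex.I * (y : ℂ)) *
            ((∑' l : ℕ, (-1 : ℝ) ^ l * g ((m : ℝ) + l + y) : ℝ) : ℂ) := by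
  -- basic set facts
  have hsU : (⋃ l : ℕ, Set.Ico ((m : ℝ) + l) ((m : ℝ) + l + 1)) = Set.Ici (m : ℝ) := by
    ext x
    simp only [Set.mem_iUnion, Set.mem_Ico, Set.mem_Ici]
    constructor
    · rintro ⟨l, h1, h2⟩
      have : (0 : ℝ) ≤ l := Nat.cast_nonneg l
      linarith
    · intro hx
      refine ⟨⌊x - m⌋₊, ?_, ?_⟩
      · have := Nat.floor_le (sub_nonneg.mpr hx); linarith
      · have := Nat.lt_floor_add_one (x - (m : ℝ)); linarith
  have hdisj : Pairwise (Function.onFun Disjoint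
      fun l : ℕ => Set.Ico ((m : ℝ) + l) ((m : ℝ) + l + 1)) := by
    have key : ∀ i j : ℕ, i < j → (m : ℝ) + i + 1 ≤ (m : ℝ) + j := by
      intro i j h
      have : (i : ℝ) + 1 ≤ j := by exact_mod_cast h
      linarith
    intro i j hij
    rcases hij.lt_or_gt with h | h
    · exact Set.Ico_disjoint_Ico.mpr
        ((min_le_left _ _).trans ((key i j h).trans (le_max_right _ _)))
    · exact Set.Ico_disjoint_Ico.mpr
        ((min_le_right _ _).trans ((key j i h).trans (le_max_left _ _)))
  -- integrability of the translated pieces on (0,1]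
  have hgl : ∀ l : ℕ, IntegrableOn (fun y => g ((m : ℝ) + l + y)) (Set.Ioc (0 : ℝ) 1) := by
    intro l
    have h1 : IntegrableOn g (Set.Ioc ((m : ℝ) + l) ((m : ℝ) + l + 1)) := by
      refine hg.mono_set fun x hx => ?_
      have : (0 : ℝ) ≤ l := Nat.cast_nonneg l
      have := hx.1
      simp only [Set.mem_Ici]
      linarith
    have h2 : IntervalIntegrable g volume ((m : ℝ) + l) ((m : ℝ) + l + 1) := by
      rw [intervalIntegrable_iff_integrableOn_Ioc_of_le (by linarith)]
      exact h1
    have h3 := h2.comp_add_right ((m : ℝ) + l)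
    simp only [sub_self, add_sub_cancel_left] at h3
    rw [intervalIntegrable_iff_integrableOn_Ioc_of_le (zero_le_one' ℝ)] at h3
    refine h3.congr_fun ?_ measurableSet_Ioc
    intro y _
    exact congrArg g (add_comm y _)
  have hmeasl : ∀ l : ℕ, AEStronglyMeasurable (fun y => g ((m : ℝ) + l + y))
      (volume.restrict (Set.Ioc (0 : ℝ) 1)) := fun l => (hgl l).1
  -- summability of the integrals of |g| over the pieces
  have habs : HasSum (fun l : ℕ => ∫ x in Set.Ico ((m : ℝ) + l) ((m : ℝ) + l + 1), |g x|)
      (∫ x in Set.Ici (m : ℝ), |g x|) := by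
    have h := hasSum_integral_iUnion (μ := volume)
      (s := fun l : ℕ => Set.Ico ((m : ℝ) + l) ((m : ℝ) + l + 1)) (f := fun x => |g x|)
      (fun l => measurableSet_Ico) hdisj (by rw [hsU]; exact hg.abs)
    rwa [hsU] at h
  have hshift_abs : ∀ l : ℕ, (∫ y in Set.Ioc (0 : ℝ) 1, |g ((m : ℝ) + l + y)|) =
      ∫ x in Set.Ico ((m : ℝ) + l) ((m : ℝ) + l + 1), |g x| := fun l =>
    shift_integral (fun x => |g x|) ((m : ℝ) + l)
  have hsummable : Summable (fun l : ℕ => ∫ y in Set.Ioc (0 : ℝ) 1, |g ((m : ℝ) + l + y)|) := by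
    simp only [hshift_abs]
    exact habs.summable
  have ha_nonneg : ∀ l : ℕ, 0 ≤ ∫ y in Set.Ioc (0 : ℝ) 1, |g ((m : ℝ) + l + y)| := fun l =>
    integral_nonneg fun y => abs_nonneg _
  -- key finiteness
  have hQeq : ∀ l : ℕ, (∫⁻ y in Set.Ioc (0 : ℝ) 1, (‖g ((m : ℝ) + l + y)‖₊ : ENNReal)) =
      ENNReal.ofReal (∫ y in Set.Ioc (0 : ℝ) 1, |g ((m : ℝ) + l + y)|) := by
    intro l
    rw [show (∫⁻ y in Set.Ioc (0 : ℝ) 1, (‖g ((m : ℝ) + l + y)‖₊ : ENNReal)) = _ from (ofReal_integral_norm_eq_lintegral_enorm (hgl l)).symm]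
    simp [Real.norm_eq_abs]
  have hQ : (∑' l : ℕ, ∫⁻ y in Set.Ioc (0 : ℝ) 1, (‖g ((m : ℝ) + l + y)‖₊ : ENNReal)) ≠ ⊤ := by
    simp only [hQeq]
    rw [← ENNReal.ofReal_tsum_of_nonneg ha_nonneg hsummable]
    exact ENNReal.ofReal_ne_top
  -- Part 1: a.e. summability
  have hm' : ∀ l : ℕ, AEMeasurable (fun y => (‖g ((m : ℝ) + l + y)‖₊ : ENNReal))
      (volume.restrict (Set.Ioc (0 : ℝ) 1)) := fun l => (hmeasl l).enorm
  have h1 : ∀ᵐ y ∂(volume.restrict (Set.Ioc (0 : ℝ) 1)),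
      Summable (fun l : ℕ => |g ((m : ℝ) + l + y)|) := by
    have hlt := ae_lt_top' (AEMeasurable.ennreal_tsum hm') (by rwa [lintegral_tsum hm'])
    filter_upwards [hlt] with y hy
    have hs := ENNReal.tsum_coe_ne_top_iff_summable.mp hy.ne
    have := NNReal.summable_coe.mpr hs
    simpa [← Real.norm_eq_abs] using this
  have part1 : ∀ᵐ y : ℝ, y ∈ Set.Icc (0 : ℝ) 1 →
      Summable (fun l : ℕ => |g ((m : ℝ) + l + y)|) := by
    have h1' := (ae_restrict_iff' measurableSet_Ioc).mp h1
    have h0 : ∀ᵐ y : ℝ, y ≠ 0 := by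
      rw [ae_iff]
      simpa using Real.volume_singleton (a := 0)
    filter_upwards [h1', h0] with y hy hy0 hmem
    exact hy ⟨lt_of_le_of_ne hmem.1 (Ne.symm hy0), hmem.2⟩
  refine ⟨part1, ?_, ?_⟩
  -- Part 2: integrability of the tsum
  · rw [integrableOn_Icc_iff_integrableOn_Ioc]
    refine my_integrable_tsum (fun l => (hmeasl l).const_mul _) ?_
    have : ∀ l : ℕ, (∫⁻ y in Set.Ioc (0 : ℝ) 1, (‖(-1 : ℝ) ^ l * g ((m : ℝ) + l + y)‖₊ : ENNReal))
        = ∫⁻ y in Set.Ioc (0 : ℝ) 1, (‖g ((m : ℝ) + l + y)‖₊ : ENNReal) := by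
      intro l
      refine lintegral_congr fun y => ?_
      simp [nnnorm_mul]
    simp only [this]
    exact hQ
  -- Part 3: the integral identity
  · set F : ℝ → ℂ := fun x =>
      Complex.exp ((Real.pi : ℂ) * Complex.I * (x : ℂ)) * (g x : ℂ) with hF
    have hexp_norm : ∀ t : ℝ, ‖Complex.exp ((Real.pi : ℂ) * Complex.I * (t : ℂ))‖ = 1 := by
      intro t
      rw [Complex.norm_exp]
      have : ((Real.pi : ℂ) * Complex.I * (t : ℂ)).re = 0 := by
        simp [Complex.mul_re, Complex.mul_im]
      rw [this, Real.exp_zero]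
    have hFint : IntegrableOn F (Set.Ici (m : ℝ)) := by
      refine Integrable.bdd_mul (hg.ofReal) ?_ (c := 1) (ae_of_all _ fun x => (hexp_norm x).le)
      exact (Complex.continuous_exp.comp (by fun_prop)).aestronglyMeasurable
    have hLHS : HasSum (fun l : ℕ => ∫ x in Set.Ico ((m : ℝ) + l) ((m : ℝ) + l + 1), F x)
        (∫ x in Set.Ici (m : ℝ), F x) := by
      have h := hasSum_integral_iUnion (μ := volume)
        (s := fun l : ℕ => Set.Ico ((m : ℝ) + l) ((m : ℝ) + l + 1)) (f := F)
        (fun l => measurableSet_Ico) hdisj (by rw [hsU]; exact hFint)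
      rwa [hsU] at h
    -- the pointwise key identity
    have key : ∀ (l : ℕ) (y : ℝ), F ((m : ℝ) + l + y) =
        (-1 : ℂ) ^ m * ((-1 : ℂ) ^ l *
          (Complex.exp ((Real.pi : ℂ) * Complex.I * (y : ℂ)) * (g ((m : ℝ) + l + y) : ℂ))) := by
      intro l y
      simp only [hF]
      have harg : (Real.pi : ℂ) * Complex.I * (((m : ℝ) + l + y : ℝ) : ℂ) =
          (m : ℂ) * ((Real.pi : ℂ) * Complex.I) +
            ((l : ℂ) * ((Real.pi : ℂ) * Complex.I) + (Real.pi : ℂ) * Complex.I * (y : ℂ)) := by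
        push_cast
        ring
      rw [harg, Complex.exp_add, Complex.exp_add, Complex.exp_int_mul, Complex.exp_nat_mul,
        Complex.exp_pi_mul_I]
      ring
    -- per-piece: translate
    have hterm : ∀ l : ℕ, (∫ x in Set.Ico ((m : ℝ) + l) ((m : ℝ) + l + 1), F x) =
        (-1 : ℂ) ^ m * ((-1 : ℂ) ^ l *
          ∫ y in Set.Ioc (0 : ℝ) 1,
            Complex.exp ((Real.pi : ℂ) * Complex.I * (y : ℂ)) * (g ((m : ℝ) + l + y) : ℂ)) := by
      intro l
      rw [← shift_integral F ((m : ℝ) + l)]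
      simp_rw [key l, integral_const_mul]
    -- RHS manipulation
    have hRHS : (∫ y in (0 : ℝ)..1,
          Complex.exp ((Real.pi : ℂ) * Complex.I * (y : ℂ)) *
            ((∑' l : ℕ, (-1 : ℝ) ^ l * g ((m : ℝ) + l + y) : ℝ) : ℂ)) =
        ∑' l : ℕ, (-1 : ℂ) ^ l *
          ∫ y in Set.Ioc (0 : ℝ) 1,
            Complex.exp ((Real.pi : ℂ) * Complex.I * (y : ℂ)) * (g ((m : ℝ) + l + y) : ℂ) := by
      rw [intervalIntegral.integral_of_le (zero_le_one' ℝ)]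
      have hpt : ∀ y : ℝ,
          Complex.exp ((Real.pi : ℂ) * Complex.I * (y : ℂ)) *
            ((∑' l : ℕ, (-1 : ℝ) ^ l * g ((m : ℝ) + l + y) : ℝ) : ℂ) =
          ∑' l : ℕ, (-1 : ℂ) ^ l *
            (Complex.exp ((Real.pi : ℂ) * Complex.I * (y : ℂ)) * (g ((m : ℝ) + l + y) : ℂ)) := by
        intro y
        rw [Complex.ofReal_tsum, ← tsum_mul_left]
        refine tsum_congr fun l => ?_
        push_cast
        ring
      simp_rw [hpt]
      rw [integral_tsum]
      · refine tsum_congr fun l => ?_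
        rw [integral_const_mul]
      · intro l
        exact (((Complex.continuous_exp.comp (by fun_prop)).aestronglyMeasurable).mul
          (Complex.continuous_ofReal.comp_aestronglyMeasurable (hmeasl l))).const_mul _
      · have : ∀ l : ℕ, (∫⁻ y in Set.Ioc (0 : ℝ) 1,
            (‖(-1 : ℂ) ^ l * (Complex.exp ((Real.pi : ℂ) * Complex.I * (y : ℂ)) *
              (g ((m : ℝ) + l + y) : ℂ))‖₊ : ENNReal)) =
            ∫⁻ y in Set.Ioc (0 : ℝ) 1, (‖g ((m : ℝ) + l + y)‖₊ : ENNReal) := by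
          intro l
          refine lintegral_congr fun y => ?_
          have hnorm : ‖(-1 : ℂ) ^ l * (Complex.exp ((Real.pi : ℂ) * Complex.I * (y : ℂ)) *
              (g ((m : ℝ) + l + y) : ℂ))‖ = ‖g ((m : ℝ) + l + y)‖ := by
            rw [norm_mul, norm_mul, norm_pow, norm_neg, norm_one, one_pow, one_mul,
              hexp_norm, one_mul, Complex.norm_real]
          rw [← enorm_eq_nnnorm, ← enorm_eq_nnnorm, ← ofReal_norm, ← ofReal_norm, hnorm]
        simp only [enorm_eq_nnnorm, this]
        exact hQ
    rw [← hLHS.tsum_eq, hRHS]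
    simp_rw [hterm]
    rw [tsum_mul_left]
end

section
/- Fix a real τ > 0. For each natural number N ≥ 1, let J(N) be the complex line integral of z ↦ exp(iπz + (log z)/z) along the straight segment from 2N·(1 + τi) to 2N, where log is the principal branch of the complex logarithm. Then lim_{N→∞} J(N) = −i/π. -/
open MeasureTheory Filter

/-- The complex line integral of `f` along the straight segment from `w₁` to `w₂`:
`∫₀¹ f (w₁ + t (w₂ - w₁)) (w₂ - w₁) dt`. -/
noncomputable def segmentIntegral (f : ℂ → ℂ) (w₁ w₂ : ℂ) : ℂ :=
  ∫ t in (0 : ℝ)..1, f (w₁ + (t : ℂ) * (w₂ - w₁)) * (w₂ - w₁)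

set_option maxHeartbeats 1000000 in
lemma key_s7 (τ : ℝ) (hτ : 0 < τ) (N : ℕ) (hN : 1 ≤ N)
    (hε : (Real.log (2*N*(1+τ)) + Real.pi) / (2*N) ≤ 1) :
    ‖segmentIntegral
          (fun z : ℂ => Complex.exp (Complex.I * (Real.pi : ℂ) * z + Complex.log z / z))
          ((2 * N : ℂ) * (1 + (τ : ℂ) * Complex.I)) (2 * N : ℂ)
      - (-Complex.I / (Real.pi : ℂ)) * (1 - Complex.exp (-(2*Real.pi*N*τ : ℝ)))‖
      ≤ 2 * ((Real.log (2*N*(1+τ)) + Real.pi) / (2*N)) / Real.pi := by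
  have hπ := Real.pi_pos
  have hN0 : (0:ℝ) < (N:ℝ) := by exact_mod_cast hN
  set ε : ℝ := (Real.log (2*N*(1+τ)) + Real.pi) / (2*N) with hεdef
  have hε0 : 0 ≤ ε := by
    apply div_nonneg _ (by positivity)
    have hN1 : (1:ℝ) ≤ (N:ℝ) := by exact_mod_cast hN
    have : (0:ℝ) ≤ Real.log (2*N*(1+τ)) := Real.log_nonneg (by nlinarith [hτ.le])
    linarith
  set a : ℝ := 2*Real.pi*N*τ with hadef
  have ha : 0 < a := by positivity
  set c : ℂ := -((2*(N:ℝ)*τ : ℝ):ℂ) * Complex.I with hcdef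
  have hw : (2 * (N:ℂ)) - (2 * (N:ℂ)) * (1 + (τ:ℂ) * Complex.I) = c := by
    simp only [hcdef]; push_cast; ring
  set p : ℝ → ℂ := fun t => ((2*(N:ℝ) : ℝ):ℂ) + ((2*(N:ℝ)*τ*(1-t) : ℝ):ℂ) * Complex.I with hpdef
  have hp : ∀ t : ℝ, (2 * (N:ℂ)) * (1 + (τ:ℂ) * Complex.I) + (t:ℂ) * c = p t := by
    intro t; simp only [hpdef, hcdef]; push_cast; ring
  have hre : ∀ t : ℝ, (p t).re = 2*N := by
    intro t; simp [hpdef]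
  have him : ∀ t : ℝ, (p t).im = 2*N*τ*(1-t) := by
    intro t; simp [hpdef]
  have hp0 : ∀ t : ℝ, p t ≠ 0 := by
    intro t h
    have := hre t
    rw [h] at this
    simp at this
    linarith
  have hmem : ∀ t : ℝ, p t ∈ Complex.slitPlane := by
    intro t
    rw [Complex.mem_slitPlane_iff]
    left
    rw [hre t]; positivity
  set g : ℝ → ℂ := fun t => Complex.log (p t) / p t with hgdef
  have contp : Continuous p := by
    apply Continuous.add continuous_const
    exact ((Complex.continuous_ofReal.comp (by continuity)).mul continuous_const)
  have contg : Continuous g := by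
    rw [continuous_iff_continuousAt]
    intro t
    exact ((continuousAt_clog (hmem t)).comp contp.continuousAt).div
      contp.continuousAt (hp0 t)
  -- integrand simplification
  have hsplit : ∀ t : ℝ, Complex.exp (Complex.I * (Real.pi:ℂ) * (p t) + Complex.log (p t) / p t)
      = Complex.exp (((-(a*(1-t)) : ℝ) : ℂ)) * Complex.exp (g t) := by
    intro t
    have h1 : Complex.I * (Real.pi:ℂ) * (p t)
        = ((N:ℤ):ℂ) * (2*(Real.pi:ℂ)*Complex.I) + ((-(a*(1-t)) : ℝ) : ℂ) := by
      simp only [hpdef, hadef]; push_cast; ring_nf; rw [Complex.I_sq]; ring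
    rw [h1, Complex.exp_add, Complex.exp_add, Complex.exp_int_mul_two_pi_mul_I, one_mul, hgdef]
  have hJ : segmentIntegral
          (fun z : ℂ => Complex.exp (Complex.I * (Real.pi : ℂ) * z + Complex.log z / z))
          ((2 * N : ℂ) * (1 + (τ : ℂ) * Complex.I)) (2 * N : ℂ)
      = ∫ t in (0:ℝ)..1, Complex.exp (((-(a*(1-t)) : ℝ):ℂ)) * Complex.exp (g t) * c := by
    unfold segmentIntegral
    apply intervalIntegral.integral_congr
    intro t _
    simp only [hw, hp, hsplit]
  -- exact integral of the main term
  have hπ' : ((Real.pi:ℝ):ℂ) ≠ 0 := Complex.ofReal_ne_zero.mpr (ne_of_gt hπ)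
  have hN' : ((N:ℝ):ℂ) ≠ 0 := Complex.ofReal_ne_zero.mpr hN0.ne'
  have hτ' : ((τ:ℝ):ℂ) ≠ 0 := Complex.ofReal_ne_zero.mpr hτ.ne'
  have ha' : ((a:ℝ):ℂ) ≠ 0 := Complex.ofReal_ne_zero.mpr ha.ne'
  have hca : c / ((a:ℝ):ℂ) = -Complex.I / (Real.pi:ℂ) := by
    rw [div_eq_div_iff ha' hπ', hcdef, hadef]
    push_cast
    ring
  have hA : (∫ t in (0:ℝ)..1, Complex.exp (((-(a*(1-t)) : ℝ):ℂ)) * c)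
      = (-Complex.I / (Real.pi:ℂ)) * (1 - Complex.exp (-(a:ℝ):ℂ)) := by
    have h1 : ∀ t : ℝ, Complex.exp (((a:ℝ):ℂ) * (t:ℂ)) * (Complex.exp (-((a:ℝ):ℂ)) * c)
        = Complex.exp (((-(a*(1-t)) : ℝ):ℂ)) * c := by
      intro t
      rw [← mul_assoc, ← Complex.exp_add,
        show (((a:ℝ):ℂ) * (t:ℂ) + -((a:ℝ):ℂ)) = ((-(a*(1-t)) : ℝ):ℂ) by push_cast; ring]
    simp_rw [← h1]
    rw [intervalIntegral.integral_mul_const, integral_exp_mul_complex ha']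
    have h2 : Complex.exp ((a:ℝ):ℂ) ≠ 0 := Complex.exp_ne_zero _
    push_cast
    rw [mul_one, mul_zero, Complex.exp_zero, ← hca, Complex.exp_neg]
    field_simp
  -- integrability
  have contE : Continuous (fun t:ℝ => Complex.exp (((-(a*(1-t)) : ℝ):ℂ))) :=
    Complex.continuous_exp.comp (Complex.continuous_ofReal.comp (by continuity))
  have hint1 : IntervalIntegrable
      (fun t => Complex.exp (((-(a*(1-t)) : ℝ):ℂ)) * Complex.exp (g t) * c) volume 0 1 :=
    (((contE.mul (Complex.continuous_exp.comp contg)).mul continuous_const)).intervalIntegrable 0 1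
  have hint2 : IntervalIntegrable (fun t => Complex.exp (((-(a*(1-t)) : ℝ):ℂ)) * c) volume 0 1 :=
    (contE.mul continuous_const).intervalIntegrable 0 1
  rw [hJ, ← hA, ← intervalIntegral.integral_sub hint1 hint2]
  -- bound on g
  have hgb : ∀ t ∈ Set.Ioc (0:ℝ) 1, ‖g t‖ ≤ ε := by
    intro t ht
    have ht0 : 0 ≤ t := le_of_lt ht.1
    have ht1 : t ≤ 1 := ht.2
    have habs1 : 2*(N:ℝ) ≤ ‖p t‖ := by
      calc 2*(N:ℝ) = (p t).re := (hre t).symm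
        _ ≤ |(p t).re| := le_abs_self _
        _ ≤ ‖p t‖ := Complex.abs_re_le_norm _
    have habs2 : ‖p t‖ ≤ 2*N*(1+τ) := by
      refine le_trans (Complex.norm_le_abs_re_add_abs_im _) ?_
      rw [hre t, him t, abs_of_nonneg (by positivity),
        abs_of_nonneg (mul_nonneg (by positivity) (by linarith) : (0:ℝ) ≤ 2*N*τ*(1-t))]
      have h0t : (0:ℝ) ≤ 2*(N:ℝ)*τ*t := mul_nonneg (by positivity) ht0
      nlinarith [h0t]
    have hap : (0:ℝ) < ‖p t‖ := lt_of_lt_of_le (by positivity) habs1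
    have hN1 : (1:ℝ) ≤ (N:ℝ) := by exact_mod_cast hN
    have hlog : ‖Complex.log (p t)‖ ≤ Real.log (2*N*(1+τ)) + Real.pi := by
      refine le_trans (Complex.norm_le_abs_re_add_abs_im _) ?_
      rw [Complex.log_re, Complex.log_im,
        abs_of_nonneg (Real.log_nonneg (by linarith [habs1]))]
      have h2 := Complex.abs_arg_le_pi (p t)
      have h3 : Real.log (‖p t‖) ≤ Real.log (2*N*(1+τ)) :=
        Real.log_le_log hap habs2
      linarith
    have : ‖g t‖ = ‖Complex.log (p t)‖ / ‖p t‖ := by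
      simp [hgdef, map_div₀]
    rw [this, hεdef]
    refine div_le_div₀ ?_ hlog (by positivity) habs1
    have : (0:ℝ) ≤ Real.log (2*N*(1+τ)) := Real.log_nonneg (by nlinarith [hN1, hτ.le])
    linarith
  -- pointwise norm bound
  have hbound : ∀ t ∈ Set.Ioc (0:ℝ) 1,
      ‖Complex.exp (((-(a*(1-t)) : ℝ):ℂ)) * Complex.exp (g t) * c
        - Complex.exp (((-(a*(1-t)) : ℝ):ℂ)) * c‖
      ≤ Real.exp (a*t - a) * (2*ε) * (2*(N:ℝ)*τ) := by
    intro t ht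
    have key1 : Complex.exp (((-(a*(1-t)) : ℝ):ℂ)) * Complex.exp (g t) * c
        - Complex.exp (((-(a*(1-t)) : ℝ):ℂ)) * c
        = Complex.exp (((-(a*(1-t)) : ℝ):ℂ)) * (Complex.exp (g t) - 1) * c := by ring
    rw [key1, norm_mul, norm_mul]
    have e1 : ‖Complex.exp (((-(a*(1-t)) : ℝ):ℂ))‖ = Real.exp (a*t - a) := by
      rw [Complex.norm_exp, Complex.ofReal_re]
      exact congrArg Real.exp (by ring)
    have e2 : ‖c‖ = 2*(N:ℝ)*τ := by
      rw [hcdef, norm_mul, norm_neg, Complex.norm_real, Complex.norm_I, Real.norm_eq_abs,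
        mul_one]
      exact abs_of_nonneg (by positivity)
    have e3 : ‖Complex.exp (g t) - 1‖ ≤ 2*ε := by
      have h1 : ‖g t‖ ≤ ε := hgb t ht
      have h2 := Complex.norm_exp_sub_one_le (x := g t) (le_trans h1 hε)
      linarith
    rw [e1, e2]
    have hexp : (0:ℝ) ≤ Real.exp (a*t - a) := (Real.exp_pos _).le
    have hc2 : (0:ℝ) ≤ 2*(N:ℝ)*τ := by positivity
    exact mul_le_mul_of_nonneg_right (mul_le_mul_of_nonneg_left e3 hexp) hc2
  -- integral of the bound
  have hGint : IntervalIntegrable (fun t => Real.exp (a*t - a) * (2*ε) * (2*(N:ℝ)*τ))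
      volume 0 1 :=
    (((Real.continuous_exp.comp (by continuity)).mul continuous_const).mul
      continuous_const).intervalIntegrable 0 1
  have hexpint : (∫ t in (0:ℝ)..1, Real.exp (a*t - a)) = (1 - Real.exp (-a))/a := by
    have h1 : ∀ t : ℝ, Real.exp (a*t - a) = Real.exp (a*t) * Real.exp (-a) := by
      intro t; rw [← Real.exp_add]; exact congrArg Real.exp (by ring)
    simp_rw [h1]
    rw [intervalIntegral.integral_mul_const, intervalIntegral.integral_comp_mul_left
      Real.exp ha.ne']
    simp only [mul_one, mul_zero, integral_exp, Real.exp_zero, smul_eq_mul]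
    rw [Real.exp_neg]
    field_simp
  have hGval : (∫ t in (0:ℝ)..1, Real.exp (a*t - a) * (2*ε) * (2*(N:ℝ)*τ))
      = (1 - Real.exp (-a))/a * (2*ε) * (2*(N:ℝ)*τ) := by
    rw [show (fun t => Real.exp (a*t - a) * (2*ε) * (2*(N:ℝ)*τ))
        = fun t => Real.exp (a*t - a) * ((2*ε) * (2*(N:ℝ)*τ)) by funext t; ring]
    rw [intervalIntegral.integral_mul_const, hexpint]
    ring
  refine le_trans (intervalIntegral.norm_integral_le_abs_of_norm_le ?_ hGint) ?_
  · rw [Set.uIoc_of_le (zero_le_one' ℝ)]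
    rw [ae_restrict_iff' measurableSet_Ioc]
    exact Filter.Eventually.of_forall hbound
  · rw [hGval]
    have hea : Real.exp (-a) ≤ 1 := Real.exp_le_one_iff.mpr (by linarith)
    have hea0 : (0:ℝ) < Real.exp (-a) := Real.exp_pos _
    have habs : |(1 - Real.exp (-a))/a * (2*ε) * (2*(N:ℝ)*τ)|
        = (1 - Real.exp (-a))/a * (2*ε) * (2*(N:ℝ)*τ) := by
      apply abs_of_nonneg
      have : (0:ℝ) ≤ (1 - Real.exp (-a)) := by linarith
      positivity
    rw [habs]
    have hid : (2*(N:ℝ)*τ)/a = 1/Real.pi := by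
      rw [hadef]; field_simp
    calc (1 - Real.exp (-a))/a * (2*ε) * (2*(N:ℝ)*τ)
        = (1 - Real.exp (-a)) * (2*ε) * ((2*(N:ℝ)*τ)/a) := by ring
      _ = (1 - Real.exp (-a)) * (2*ε) * (1/Real.pi) := by rw [hid]
      _ ≤ 1 * (2*ε) * (1/Real.pi) := by
          apply mul_le_mul_of_nonneg_right _ (by positivity)
          apply mul_le_mul_of_nonneg_right _ (by positivity)
          linarith
      _ = 2*ε/Real.pi := by ring

/-- For `τ > 0`, the line integral of `z ↦ exp(iπz + log z / z)` along the segment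
from `2N(1+τi)` to `2N` tends to `-i/π` as `N → ∞`. -/
theorem short_leg_limit (τ : ℝ) (hτ : 0 < τ) :
    Tendsto
      (fun N : ℕ =>
        segmentIntegral
          (fun z : ℂ => Complex.exp (Complex.I * (Real.pi : ℂ) * z + Complex.log z / z))
          ((2 * N : ℂ) * (1 + (τ : ℂ) * Complex.I)) (2 * N : ℂ))
      atTop (nhds (-Complex.I / (Real.pi : ℂ))) := by
  have hπ := Real.pi_pos
  set εf : ℕ → ℝ := fun N => (Real.log (2*N*(1+τ)) + Real.pi) / (2*N) with hεf
  have hε0 : Tendsto εf atTop (nhds 0) := by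
    have h1 : Tendsto (fun x : ℝ => Real.log x / x + Real.pi / x) atTop (nhds 0) := by
      have ha := Real.isLittleO_log_id_atTop.tendsto_div_nhds_zero
      have hb : Tendsto (fun x : ℝ => Real.pi / x) atTop (nhds 0) :=
        tendsto_const_nhds.div_atTop tendsto_id
      simpa using ha.add hb
    have hX : Tendsto (fun N : ℕ => 2*(N:ℝ)*(1+τ)) atTop atTop := by
      apply Filter.Tendsto.atTop_mul_const (by linarith : (0:ℝ) < 1+τ)
      exact (tendsto_natCast_atTop_atTop (R := ℝ)).const_mul_atTop (by norm_num)
    have h2 := (h1.comp hX).const_mul (1+τ)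
    rw [mul_zero] at h2
    apply h2.congr'
    filter_upwards [eventually_ge_atTop 1] with N hN
    have hN0 : (0:ℝ) < (N:ℝ) := by exact_mod_cast hN
    have h1τ : (0:ℝ) < 1+τ := by linarith
    simp only [Function.comp_apply, hεf]
    rw [← add_div]
    field_simp
  have hA : Tendsto (fun N : ℕ =>
      (-Complex.I / (Real.pi:ℂ)) * (1 - Complex.exp (-(2*Real.pi*N*τ : ℝ))))
      atTop (nhds (-Complex.I / (Real.pi:ℂ))) := by
    have h1 : Tendsto (fun N : ℕ => Real.exp (-(2*Real.pi*N*τ))) atTop (nhds 0) := by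
      apply Real.tendsto_exp_atBot.comp
      apply tendsto_neg_atBot_iff.mpr
      apply Filter.Tendsto.atTop_mul_const hτ
      exact (tendsto_natCast_atTop_atTop (R := ℝ)).const_mul_atTop (by positivity)
    have h2 : Tendsto (fun N : ℕ => Complex.exp (-(2*Real.pi*N*τ : ℝ))) atTop (nhds 0) := by
      have hc := (Complex.continuous_ofReal.tendsto 0).comp h1
      simp only [Complex.ofReal_zero] at hc
      apply hc.congr
      intro N
      simp only [Function.comp_apply, Complex.ofReal_exp, Complex.ofReal_neg]
    have h3 := tendsto_const_nhds (x := (1:ℂ)) (f := atTop (α := ℕ)) |>.sub h2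
    rw [sub_zero] at h3
    have h4 := h3.const_mul (-Complex.I / (Real.pi:ℂ))
    rw [mul_one] at h4
    exact h4
  have hEbnd : ∀ᶠ N : ℕ in atTop,
      ‖segmentIntegral
          (fun z : ℂ => Complex.exp (Complex.I * (Real.pi : ℂ) * z + Complex.log z / z))
          ((2 * N : ℂ) * (1 + (τ : ℂ) * Complex.I)) (2 * N : ℂ)
        - (-Complex.I / (Real.pi:ℂ)) * (1 - Complex.exp (-(2*Real.pi*N*τ : ℝ)))‖
        ≤ 2 * εf N / Real.pi := by
    filter_upwards [eventually_ge_atTop 1,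
      hε0.eventually (gt_mem_nhds (by norm_num : (0:ℝ) < 1))] with N h1 h2
    exact key_s7 τ hτ N h1 (le_of_lt h2)
  have hE : Tendsto (fun N : ℕ =>
      segmentIntegral
          (fun z : ℂ => Complex.exp (Complex.I * (Real.pi : ℂ) * z + Complex.log z / z))
          ((2 * N : ℂ) * (1 + (τ : ℂ) * Complex.I)) (2 * N : ℂ)
        - (-Complex.I / (Real.pi:ℂ)) * (1 - Complex.exp (-(2*Real.pi*N*τ : ℝ))))
      atTop (nhds 0) := by
    apply squeeze_zero_norm' hEbnd
    have := (hε0.const_mul 2).div_const Real.pi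
    simpa using this
  have hfin := hA.add hE
  rw [add_zero] at hfin
  exact hfin.congr (fun N => by ring)
end

section
/- Fix a real τ > 0. For each natural number N ≥ 1, let H(N) be the complex line integral of z ↦ exp(iπz + (log z)/z) along the straight segment from 1 to 2N·(1 + τi), where log is the principal branch of the complex logarithm. Then lim_{N→∞} H(N) exists, and M_I = −i/π + lim_{N→∞} H(N), where M_I := lim_{N→∞, N∈ℕ} ∫₁^{2N} e^{iπx} · x^(1/x) dx. -/
open MeasureTheory Filter

section Aux

open intervalIntegral Set
open scoped Interval

noncomputable def ff : ℂ → ℂ := fun z =>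
  Complex.exp (Complex.I * (Real.pi : ℂ) * z + Complex.log z / z)

lemma ff_diff {z : ℂ} (hz : 0 < z.re) : DifferentiableAt ℂ ff z := by
  have hz0 : z ≠ 0 := by
    intro h; rw [h] at hz; simp at hz
  have hlog : DifferentiableAt ℂ Complex.log z :=
    Complex.differentiableAt_log (Or.inl hz)
  exact (((differentiableAt_const _).mul differentiableAt_id).add
    (hlog.div differentiableAt_id hz0)).cexp

lemma ff_cont {z : ℂ} (hz : 0 < z.re) : ContinuousAt ff z := (ff_diff hz).continuousAt

lemma cont_vert (a : ℝ) (ha : 0 < a) : Continuous fun y : ℝ => ff ((a : ℂ) + y * Complex.I) := by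
  rw [continuous_iff_continuousAt]
  intro y
  apply (ff_cont (by simp [ha])).comp
  fun_prop

lemma cont_horiz (b : ℝ) : ContinuousOn (fun x : ℝ => ff ((x : ℂ) + b * Complex.I))
    {x : ℝ | 0 < x} := by
  intro x hx
  exact ((ff_cont (by simpa using hx)).comp (by fun_prop)).continuousWithinAt

noncomputable def FF : ℂ → ℂ := fun z =>
  (∫ x in (1:ℝ)..z.re, ff (x : ℂ)) +
    Complex.I • ∫ y in (0:ℝ)..z.im, ff ((z.re : ℂ) + y * Complex.I)

lemma horiz_intble {a b : ℝ} (ha : 0 < a) (hb : 0 < b) (c : ℝ) :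
    IntervalIntegrable (fun x : ℝ => ff ((x : ℂ) + c * Complex.I)) volume a b := by
  apply ContinuousOn.intervalIntegrable
  apply (cont_horiz c).mono
  intro x hx
  rw [Set.uIcc] at hx
  exact lt_of_lt_of_le (lt_min ha hb) hx.1

lemma FF_sub {z w : ℂ} (hz : 0 < z.re) (hw : 0 < w.re) :
    FF w - FF z = (∫ x in z.re..w.re, ff ((x : ℂ) + z.im * Complex.I)) +
      Complex.I • ∫ y in z.im..w.im, ff ((w.re : ℂ) + y * Complex.I) := by
  have H : DifferentiableOn ℂ ff
      (uIcc ((z.re:ℂ)).re (((w.re:ℂ)) + z.im*Complex.I).re ×ℂ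
        uIcc ((z.re:ℂ)).im (((w.re:ℂ)) + z.im*Complex.I).im) := by
    intro u hu
    apply (ff_diff ?_).differentiableWithinAt
    rw [Complex.mem_reProdIm] at hu
    have hre := hu.1
    simp only [Complex.add_re, Complex.ofReal_re, Complex.mul_re, Complex.ofReal_im,
      Complex.I_re, Complex.I_im, mul_zero, mul_one, zero_mul, sub_zero, add_zero] at hre
    rw [Set.uIcc] at hre
    exact lt_of_lt_of_le (lt_min hz hw) hre.1
  have hrect := Complex.integral_boundary_rect_eq_zero_of_differentiableOn ff
      (z.re : ℂ) ((w.re : ℂ) + z.im * Complex.I) H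
  simp only [Complex.add_re, Complex.ofReal_re, Complex.mul_re, Complex.ofReal_im,
      Complex.I_re, Complex.I_im, Complex.add_im, Complex.mul_im, mul_zero, mul_one,
      zero_mul, sub_zero, zero_add, zero_sub, add_zero, Complex.ofReal_zero] at hrect
  have h1 : (∫ x in (1:ℝ)..w.re, ff (x : ℂ)) - ∫ x in (1:ℝ)..z.re, ff (x : ℂ) =
      ∫ x in z.re..w.re, ff (x : ℂ) := by
    have h0 : ∀ x : ℝ, (x:ℂ) + ((0:ℝ):ℂ) * Complex.I = (x:ℂ) := by intro x; simp
    have i1 : IntervalIntegrable (fun x : ℝ => ff (x:ℂ)) volume 1 w.re := by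
      simpa [h0] using horiz_intble one_pos hw 0
    have i2 : IntervalIntegrable (fun x : ℝ => ff (x:ℂ)) volume 1 z.re := by
      simpa [h0] using horiz_intble one_pos hz 0
    exact integral_interval_sub_left i1 i2
  have h2 : (∫ y in (0:ℝ)..z.im, ff ((w.re:ℂ) + y * Complex.I)) +
      (∫ y in z.im..w.im, ff ((w.re:ℂ) + y * Complex.I)) =
      ∫ y in (0:ℝ)..w.im, ff ((w.re:ℂ) + y * Complex.I) := by
    apply integral_add_adjacent_intervals <;>
      exact (cont_vert w.re hw).intervalIntegrable _ _
  simp only [smul_eq_mul] at hrect ⊢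
  have expand : FF w - FF z =
      ((∫ x in (1:ℝ)..w.re, ff (x : ℂ)) - ∫ x in (1:ℝ)..z.re, ff (x : ℂ)) +
      Complex.I * (∫ y in (0:ℝ)..w.im, ff ((w.re:ℂ) + y * Complex.I)) -
      Complex.I * (∫ y in (0:ℝ)..z.im, ff ((z.re:ℂ) + y * Complex.I)) := by
    simp only [FF, smul_eq_mul]; ring
  rw [expand, h1, ← h2]
  linear_combination hrect

lemma FF_deriv {z : ℂ} (hz : 0 < z.re) : HasDerivAt FF (ff z) z := by
  rw [hasDerivAt_iff_isLittleO, Asymptotics.isLittleO_iff]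
  intro c hc
  -- choose δ
  obtain ⟨δ₂, hδ₂pos, hδ₂⟩ : ∃ δ > 0, ∀ u : ℂ, dist u z < δ → ‖ff u - ff z‖ ≤ c / 2 := by
    have := Metric.continuousAt_iff.mp (ff_cont hz) (c/2) (by positivity)
    obtain ⟨δ, hδ, h⟩ := this
    exact ⟨δ, hδ, fun u hu => le_of_lt (by simpa [dist_eq_norm] using h hu)⟩
  obtain ⟨δ₁, hδ₁pos, hδ₁⟩ : ∃ δ > 0, ∀ u : ℂ, dist u z < δ → 0 < u.re := by
    refine ⟨z.re, hz, fun u hu => ?_⟩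
    have : |u.re - z.re| ≤ dist u z := by
      rw [Complex.dist_eq]
      simpa using Complex.abs_re_le_norm (u - z)
    have := abs_lt.mp (lt_of_le_of_lt this hu)
    linarith [this.1]
  set δ := min δ₁ δ₂ with hδdef
  have hδpos : 0 < δ := lt_min hδ₁pos hδ₂pos
  filter_upwards [Metric.ball_mem_nhds z (show 0 < δ/2 by positivity)] with w hwball
  have hwz : ‖w - z‖ < δ / 2 := by rwa [Metric.mem_ball, dist_eq_norm] at hwball
  have hwre : 0 < w.re := hδ₁ w (by rw [dist_eq_norm]; exact hwz.trans_le (by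
    calc δ/2 ≤ δ := by linarith
    _ ≤ δ₁ := min_le_left _ _))
  -- points on horizontal leg are close to z
  have hhoriz : ∀ x ∈ Ι z.re w.re, ‖ff ((x:ℂ) + z.im * Complex.I) - ff z‖ ≤ c / 2 := by
    intro x hx
    apply hδ₂
    have e : ((x:ℂ) + z.im * Complex.I) - z = ((x - z.re : ℝ) : ℂ) := by
      simp [Complex.ext_iff]
    calc dist ((x:ℂ) + z.im * Complex.I) z = ‖((x:ℂ) + z.im * Complex.I) - z‖ := dist_eq_norm _ _
    _ = |x - z.re| := by rw [e]; simp [← Complex.ofReal_sub, Complex.norm_real]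
    _ ≤ |w.re - z.re| := abs_sub_left_of_mem_uIcc (Set.uIoc_subset_uIcc hx)
    _ ≤ ‖w - z‖ := by simpa using Complex.abs_re_le_norm (w - z)
    _ < δ/2 := hwz
    _ ≤ δ₂ := (half_le_self hδpos.le).trans (min_le_right _ _)
  have hvert : ∀ y ∈ Ι z.im w.im, ‖ff ((w.re:ℂ) + y * Complex.I) - ff z‖ ≤ c / 2 := by
    intro y hy
    apply hδ₂
    have e : ((w.re:ℂ) + y * Complex.I) - z
        = ((w.re - z.re : ℝ) : ℂ) + ((y - z.im : ℝ):ℂ) * Complex.I := by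
      simp [Complex.ext_iff]
    calc dist ((w.re:ℂ) + y * Complex.I) z = ‖((w.re:ℂ) + y * Complex.I) - z‖ := dist_eq_norm _ _
    _ ≤ |w.re - z.re| + |y - z.im| := by
        rw [e]
        refine (norm_add_le _ _).trans (le_of_eq ?_)
        simp [← Complex.ofReal_sub, Complex.norm_real]
    _ ≤ ‖w - z‖ + ‖w - z‖ := by
        gcongr
        · simpa using Complex.abs_re_le_norm (w - z)
        · exact (abs_sub_left_of_mem_uIcc (Set.uIoc_subset_uIcc hy)).trans
            (by simpa using Complex.abs_im_le_norm (w - z))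
    _ < δ/2 + δ/2 := by gcongr
    _ ≤ δ₂ := by rw [add_halves]; exact min_le_right _ _
  -- integrability of the legs
  have ih : IntervalIntegrable (fun x : ℝ => ff ((x:ℂ) + z.im * Complex.I)) volume z.re w.re := by
    apply ContinuousOn.intervalIntegrable
    apply (cont_horiz z.im).mono
    intro x hx
    rw [Set.uIcc] at hx
    exact lt_of_lt_of_le (lt_min hz hwre) hx.1
  have iv : IntervalIntegrable (fun y : ℝ => ff ((w.re:ℂ) + y * Complex.I)) volume z.im w.im :=
    (cont_vert w.re hwre).intervalIntegrable _ _
  -- main identity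
  have key : FF w - FF z - (w - z) • ff z =
      (∫ x in z.re..w.re, (ff ((x : ℂ) + z.im * Complex.I) - ff z)) +
      Complex.I • ∫ y in z.im..w.im, (ff ((w.re : ℂ) + y * Complex.I) - ff z) := by
    rw [integral_sub ih intervalIntegrable_const, integral_sub iv intervalIntegrable_const,
      intervalIntegral.integral_const, intervalIntegral.integral_const, FF_sub hz hwre]
    have e3 : w - z = ((w.re - z.re : ℝ):ℂ) + ((w.im - z.im : ℝ):ℂ) * Complex.I := by
      simp [Complex.ext_iff]
    rw [e3]
    simp only [smul_eq_mul, Complex.real_smul]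
    push_cast
    ring
  rw [key]
  calc ‖(∫ x in z.re..w.re, (ff ((x : ℂ) + z.im * Complex.I) - ff z)) +
      Complex.I • ∫ y in z.im..w.im, (ff ((w.re : ℂ) + y * Complex.I) - ff z)‖
      ≤ ‖∫ x in z.re..w.re, (ff ((x : ℂ) + z.im * Complex.I) - ff z)‖ +
        ‖∫ y in z.im..w.im, (ff ((w.re : ℂ) + y * Complex.I) - ff z)‖ := by
        refine (norm_add_le _ _).trans (le_of_eq ?_)
        rw [norm_smul]; simp
    _ ≤ c/2 * |w.re - z.re| + c/2 * |w.im - z.im| := by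
        gcongr
        · exact intervalIntegral.norm_integral_le_of_norm_le_const hhoriz
        · exact intervalIntegral.norm_integral_le_of_norm_le_const hvert
    _ ≤ c/2 * ‖w - z‖ + c/2 * ‖w - z‖ := by
        gcongr
        · simpa using Complex.abs_re_le_norm (w - z)
        · simpa using Complex.abs_im_le_norm (w - z)
    _ = c * ‖w - z‖ := by ring

lemma seg_eq (w₁ w₂ : ℂ) (h : ∀ t : ℝ, t ∈ Set.uIcc (0:ℝ) 1 → 0 < (w₁ + t * (w₂ - w₁)).re) :
    segmentIntegral ff w₁ w₂ = FF w₂ - FF w₁ := by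
  have hγ : ∀ t : ℝ, HasDerivAt (fun t : ℝ => w₁ + (t:ℂ) * (w₂ - w₁)) (w₂ - w₁) t := by
    intro t
    have h1 : HasDerivAt (fun t : ℝ => (t:ℂ)) 1 t := by
      simpa using (hasDerivAt_id t).ofReal_comp
    simpa using (h1.mul_const (w₂ - w₁)).const_add w₁
  have key : ∀ t ∈ Set.uIcc (0:ℝ) 1,
      HasDerivAt (fun t : ℝ => FF (w₁ + (t:ℂ) * (w₂ - w₁)))
        (ff (w₁ + (t:ℂ) * (w₂ - w₁)) * (w₂ - w₁)) t := by
    intro t ht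
    have := (FF_deriv (h t ht)).scomp t (hγ t)
    simpa [smul_eq_mul, mul_comm, Function.comp_def] using this
  have hint : IntervalIntegrable
      (fun t : ℝ => ff (w₁ + (t:ℂ) * (w₂ - w₁)) * (w₂ - w₁)) volume 0 1 := by
    apply ContinuousOn.intervalIntegrable
    intro t ht
    have hc : ContinuousAt (fun s : ℝ => w₁ + (s:ℂ) * (w₂ - w₁)) t := by fun_prop
    have hcc : ContinuousAt (ff ∘ fun s : ℝ => w₁ + (s:ℂ) * (w₂ - w₁)) t :=
      (ff_cont (h t ht)).comp (x := t) hc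
    exact (hcc.mul continuousAt_const).continuousWithinAt
  have := intervalIntegral.integral_eq_sub_of_hasDerivAt key hint
  rw [segmentIntegral, this]
  norm_num

lemma eps_tendsto (τ : ℝ) (hτ : 0 < τ) :
    Tendsto (fun N : ℕ => (Real.log (2*(N:ℝ)*(1+τ)) + Real.pi) / (2*(N:ℝ)))
      atTop (nhds 0) := by
  have h1 : Tendsto (fun x : ℝ => (Real.log (x*(1+τ)) + Real.pi) / x) atTop (nhds 0) := by
    have hlog : Tendsto (fun x : ℝ => Real.log x / x) atTop (nhds 0) := by
      simpa using Real.tendsto_pow_log_div_mul_add_atTop 1 0 1 one_ne_zero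
    have hc : Tendsto (fun x : ℝ => (Real.log (1+τ) + Real.pi) * x⁻¹) atTop
        (nhds ((Real.log (1+τ) + Real.pi) * 0)) :=
      tendsto_inv_atTop_zero.const_mul _
    have h2 := hlog.add (by simpa using hc)
    rw [add_zero] at h2
    apply h2.congr'
    filter_upwards [eventually_gt_atTop (0:ℝ)] with x hx
    rw [Real.log_mul hx.ne' (by positivity)]
    field_simp
    ring
  have h2 : Tendsto (fun N : ℕ => 2*(N:ℝ)) atTop atTop :=
    Tendsto.const_mul_atTop two_pos tendsto_natCast_atTop_atTop
  exact h1.comp h2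

lemma exp_tendsto (τ : ℝ) (hτ : 0 < τ) :
    Tendsto (fun N : ℕ => Real.exp (-(2*Real.pi*(N:ℝ)*τ))) atTop (nhds 0) := by
  apply Real.tendsto_exp_atBot.comp
  apply tendsto_neg_atTop_atBot.comp
  apply Tendsto.atTop_mul_const hτ
  exact Tendsto.const_mul_atTop (by positivity) tendsto_natCast_atTop_atTop

lemma side_tendsto (τ : ℝ) (hτ : 0 < τ) :
    Tendsto (fun N : ℕ => segmentIntegral ff ((2*N : ℂ)) ((2*N : ℂ)*(1+(τ:ℂ)*Complex.I)))
      atTop (nhds (Complex.I / (Real.pi : ℂ))) := by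
  have hπ : (0:ℝ) < Real.pi := Real.pi_pos
  set ε : ℕ → ℝ := fun N => (Real.log (2*(N:ℝ)*(1+τ)) + Real.pi) / (2*(N:ℝ)) with hεdef
  have hεto : Tendsto ε atTop (nhds 0) := eps_tendsto τ hτ
  have hexpto : Tendsto (fun N : ℕ => Real.exp (-(2*Real.pi*(N:ℝ)*τ))) atTop (nhds 0) :=
    exp_tendsto τ hτ
  rw [← tendsto_sub_nhds_zero_iff]
  have htend : Tendsto (fun N : ℕ => 2*(ε N)/Real.pi + Real.exp (-(2*Real.pi*(N:ℝ)*τ))/Real.pi)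
      atTop (nhds 0) := by
    have h := ((hεto.const_mul 2).div_const Real.pi).add (hexpto.div_const Real.pi)
    simpa using h
  refine squeeze_zero_norm'
    (a := fun N : ℕ => 2*(ε N)/Real.pi + Real.exp (-(2*Real.pi*(N:ℝ)*τ))/Real.pi) ?_ htend
  · filter_upwards [eventually_ge_atTop 1, hεto.eventually_lt_const one_pos] with N hN1 hε1
    have hn : (1:ℝ) ≤ (N:ℝ) := by exact_mod_cast hN1
    have hnpos : (0:ℝ) < (N:ℝ) := by linarith
    set c : ℝ := 2*Real.pi*(N:ℝ)*τ with hcdef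
    have hc : 0 < c := by positivity
    set w₁ : ℂ := (2*N : ℂ) with hw₁
    set w₂ : ℂ := (2*N : ℂ)*(1+(τ:ℂ)*Complex.I) with hw₂
    have hεnn : 0 ≤ ε N := by
      rw [hεdef]
      apply div_nonneg _ (by positivity)
      have : (0:ℝ) ≤ Real.log (2*(N:ℝ)*(1+τ)) := Real.log_nonneg (by nlinarith)
      linarith
    have hd : w₂ - w₁ = ((2*(N:ℝ)*τ : ℝ):ℂ) * Complex.I := by
      rw [hw₁, hw₂]; push_cast; ring
    have hre : ∀ t : ℝ, (w₁ + (t:ℂ) * (w₂ - w₁)).re = 2*(N:ℝ) := by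
      intro t; rw [hd, hw₁]; simp
    have hrepos : ∀ t : ℝ, 0 < (w₁ + (t:ℂ) * (w₂ - w₁)).re := by
      intro t; rw [hre]; positivity
    set L : ℝ → ℂ := fun t =>
      Complex.log (w₁ + (t:ℂ) * (w₂ - w₁)) / (w₁ + (t:ℂ) * (w₂ - w₁)) with hLdef
    have key1 : ∀ t : ℝ, ff (w₁ + (t:ℂ) * (w₂ - w₁)) =
        ((Real.exp (-c*t) : ℝ) : ℂ) * Complex.exp (L t) := by
      intro t
      have harg : Complex.I*(Real.pi:ℂ)*(w₁ + (t:ℂ) * (w₂ - w₁)) =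
          ((N:ℤ):ℂ)*(2*(Real.pi:ℂ)*Complex.I) + ((-c*t : ℝ):ℂ) := by
        rw [hd, hw₁, hcdef]
        push_cast
        linear_combination (2*(N:ℂ)*(τ:ℂ)*(t:ℂ)*(Real.pi:ℂ)) * Complex.I_sq
      show Complex.exp _ = _
      rw [Complex.exp_add, harg, Complex.exp_add,
        Complex.exp_int_mul_two_pi_mul_I, one_mul, ← Complex.ofReal_exp]
    have icont : Continuous (fun t : ℝ => ff (w₁ + (t:ℂ) * (w₂ - w₁)) * (w₂ - w₁)) := by
      rw [continuous_iff_continuousAt]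
      intro t
      have hcc : ContinuousAt (ff ∘ fun s : ℝ => w₁ + (s:ℂ) * (w₂ - w₁)) t :=
        (ff_cont (hrepos t)).comp (x := t) (by fun_prop)
      exact hcc.mul continuousAt_const
    have i1 : IntervalIntegrable (fun t : ℝ => ff (w₁ + (t:ℂ) * (w₂ - w₁)) * (w₂ - w₁))
        volume 0 1 := icont.intervalIntegrable _ _
    have i2 : IntervalIntegrable (fun t : ℝ => ((Real.exp (-c*t) : ℝ) : ℂ) * (w₂ - w₁))
        volume 0 1 := (Continuous.intervalIntegrable (by fun_prop) _ _)
    have hIg : (∫ t in (0:ℝ)..1, Real.exp (-c*t)) = (1 - Real.exp (-c))/c := by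
      have hP : ∀ t ∈ Set.uIcc (0:ℝ) 1, HasDerivAt (fun t : ℝ => -Real.exp (-c*t)/c)
          (Real.exp (-c*t)) t := by
        intro t _
        have h0 : HasDerivAt (fun t : ℝ => -c*t) (-c) t := by
          simpa using (hasDerivAt_id t).const_mul (-c)
        have h1 := (h0.exp.neg).div_const c
        refine h1.congr_deriv ?_
        field_simp
      rw [intervalIntegral.integral_eq_sub_of_hasDerivAt hP
        ((Continuous.intervalIntegrable (by fun_prop) _ _))]
      simp only [mul_one, mul_zero, neg_zero, Real.exp_zero]
      field_simp
      ring
    have hA : (∫ t in (0:ℝ)..1, ((Real.exp (-c*t) : ℝ) : ℂ) * (w₂ - w₁)) =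
        (((1 - Real.exp (-c))/Real.pi : ℝ) : ℂ) * Complex.I := by
      rw [intervalIntegral.integral_mul_const, intervalIntegral.integral_ofReal, hIg, hd]
      push_cast [hcdef]
      have h2N : ((N:ℂ)) ≠ 0 := by exact_mod_cast hnpos.ne'
      have hπc : ((Real.pi:ℂ)) ≠ 0 := by exact_mod_cast hπ.ne'
      have hτc : ((τ:ℂ)) ≠ 0 := by exact_mod_cast hτ.ne'
      field_simp
    have hbound : ∀ t ∈ Set.Ioc (0:ℝ) 1,
        ‖ff (w₁ + (t:ℂ) * (w₂ - w₁)) * (w₂ - w₁) -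
          ((Real.exp (-c*t) : ℝ) : ℂ) * (w₂ - w₁)‖ ≤
          Real.exp (-c*t) * (2*(ε N) * (2*(N:ℝ)*τ)) := by
      intro t ht
      set z := w₁ + (t:ℂ) * (w₂ - w₁) with hz
      have habs_lb : 2*(N:ℝ) ≤ ‖z‖ := by
        have h0 := Complex.re_le_norm z
        rw [hz, hre t] at h0
        rw [hz]
        exact h0
      have habs_pos : 0 < ‖z‖ := lt_of_lt_of_le (by positivity) habs_lb
      have habs_ub : ‖z‖ ≤ 2*(N:ℝ)*(1+τ) := by
        have e2N : ‖(2*(N:ℂ))‖ = 2*(N:ℝ) := by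
          have : (2*(N:ℂ)) = ((2*(N:ℝ):ℝ):ℂ) := by push_cast; ring
          rw [this, Complex.norm_real, Real.norm_eq_abs, abs_of_pos (by positivity)]
        rw [hz, hd, hw₁]
        refine (norm_add_le _ _).trans ?_
        rw [e2N]
        simp only [norm_mul, Complex.norm_I, Complex.norm_real, Real.norm_eq_abs, mul_one]
        rw [abs_of_pos (show (0:ℝ) < t from ht.1), abs_of_pos (by positivity)]
        rw [abs_of_pos hnpos, abs_of_pos hτ]
        nlinarith [ht.2, hτ.le]
      have hlogb : ‖Complex.log z‖ ≤ Real.log (2*(N:ℝ)*(1+τ)) + Real.pi := by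
        refine (Complex.norm_le_abs_re_add_abs_im _).trans ?_
        rw [Complex.log_re, Complex.log_im]
        have h1 : |Real.log ‖z‖| = Real.log ‖z‖ := by
          rw [abs_of_nonneg]
          apply Real.log_nonneg
          linarith
        rw [h1]
        have h2 : Real.log ‖z‖ ≤ Real.log (2*(N:ℝ)*(1+τ)) :=
          Real.log_le_log habs_pos habs_ub
        have h3 : |Complex.arg z| ≤ Real.pi := Complex.abs_arg_le_pi z
        linarith
      have hnum : (0:ℝ) ≤ Real.log (2*(N:ℝ)*(1+τ)) + Real.pi := by
        have : (0:ℝ) ≤ Real.log (2*(N:ℝ)*(1+τ)) := Real.log_nonneg (by nlinarith)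
        linarith
      have hL : ‖L t‖ ≤ ε N := by
        rw [hLdef]
        simp only
        rw [← hz, norm_div, hεdef]
        simp only
        exact div_le_div₀ hnum hlogb (by positivity) habs_lb
      have habsL : ‖L t‖ ≤ ε N := hL
      have hexp1 : ‖Complex.exp (L t) - 1‖ ≤ 2 * ε N := by
        exact (Complex.norm_exp_sub_one_le (by linarith)).trans (by linarith)
      calc ‖ff z * (w₂ - w₁) - ((Real.exp (-c*t) : ℝ) : ℂ) * (w₂ - w₁)‖
          = ‖((Real.exp (-c*t) : ℝ) : ℂ)‖ * ‖Complex.exp (L t) - 1‖ * ‖w₂ - w₁‖ := by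
            rw [hz, key1 t]
            rw [show ((Real.exp (-c*t) : ℝ) : ℂ) * Complex.exp (L t) * (w₂ - w₁) -
              ((Real.exp (-c*t) : ℝ) : ℂ) * (w₂ - w₁) =
              ((Real.exp (-c*t) : ℝ) : ℂ) * ((Complex.exp (L t) - 1) * (w₂ - w₁)) from by ring]
            rw [norm_mul, norm_mul]
            ring
        _ ≤ Real.exp (-c*t) * (2*(ε N)) * (2*(N:ℝ)*τ) := by
            have e1 : ‖((Real.exp (-c*t) : ℝ) : ℂ)‖ = Real.exp (-c*t) := by
              rw [Complex.norm_real, Real.norm_eq_abs, abs_of_pos (Real.exp_pos _)]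
            have e2 : ‖w₂ - w₁‖ = 2*(N:ℝ)*τ := by
              rw [hd]
              have : ‖((2*(N:ℝ)*τ : ℝ):ℂ) * Complex.I‖ =
                  ‖(((2*(N:ℝ)*τ : ℝ):ℂ))‖ * ‖Complex.I‖ := by
                rw [norm_mul]
              rw [this, Complex.norm_real, Real.norm_eq_abs, Complex.norm_I, mul_one,
                abs_of_pos (by positivity)]
            rw [e1, e2]
            gcongr
        _ = Real.exp (-c*t) * (2*(ε N) * (2*(N:ℝ)*τ)) := by ring
    -- assemble the estimate
    set A : ℂ := (((1 - Real.exp (-c))/Real.pi : ℝ) : ℂ) * Complex.I with hAdef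
    have hsub : segmentIntegral ff w₁ w₂ - A =
        ∫ t in (0:ℝ)..1, (ff (w₁ + (t:ℂ) * (w₂ - w₁)) * (w₂ - w₁) -
          ((Real.exp (-c*t) : ℝ) : ℂ) * (w₂ - w₁)) := by
      rw [intervalIntegral.integral_sub i1 i2, hA]
      rfl
    have hnorm1 : ‖segmentIntegral ff w₁ w₂ - A‖ ≤ 2*(ε N)/Real.pi := by
      rw [hsub]
      have hb := intervalIntegral.norm_integral_le_abs_of_norm_le
        (g := fun t => Real.exp (-c*t) * (2*(ε N) * (2*(N:ℝ)*τ)))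
        (μ := volume) (a := (0:ℝ)) (b := 1)
        ((MeasureTheory.ae_restrict_iff' measurableSet_uIoc).mpr
          (Filter.Eventually.of_forall (fun t ht =>
            hbound t (by rwa [Set.uIoc_of_le zero_le_one] at ht))))
        (Continuous.intervalIntegrable (by fun_prop) _ _)
      refine hb.trans ?_
      rw [intervalIntegral.integral_mul_const, hIg]
      have hexp_le : Real.exp (-c) ≤ 1 := by
        rw [show (1:ℝ) = Real.exp 0 from (Real.exp_zero).symm]
        exact Real.exp_le_exp.mpr (by linarith)
      have hval : (0:ℝ) ≤ (1 - Real.exp (-c))/c * (2*(ε N) * (2*(N:ℝ)*τ)) := by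
        apply mul_nonneg (div_nonneg (by linarith) hc.le) (by positivity)
      rw [abs_of_nonneg hval]
      calc (1 - Real.exp (-c))/c * (2*(ε N) * (2*(N:ℝ)*τ))
          ≤ 1/c * (2*(ε N) * (2*(N:ℝ)*τ)) := by
            gcongr
            · linarith [Real.exp_pos (-c)]
        _ = 2*(ε N)/Real.pi := by
            rw [hcdef]
            field_simp
    have hnorm2 : ‖A - Complex.I / (Real.pi:ℂ)‖ = Real.exp (-c)/Real.pi := by
      have hπc : ((Real.pi:ℂ)) ≠ 0 := by exact_mod_cast hπ.ne'
      have hA2 : A - Complex.I / (Real.pi:ℂ) =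
          ((-(Real.exp (-c))/Real.pi : ℝ) : ℂ) * Complex.I := by
        rw [hAdef]
        push_cast
        field_simp
        ring
      rw [hA2]
      rw [show ‖((-(Real.exp (-c))/Real.pi : ℝ) : ℂ) * Complex.I‖ =
          ‖(((-(Real.exp (-c))/Real.pi : ℝ) : ℂ))‖ * ‖Complex.I‖ from norm_mul _ _]
      rw [Complex.norm_real, Real.norm_eq_abs, Complex.norm_I, mul_one, abs_div, abs_neg,
        abs_of_pos (Real.exp_pos _), abs_of_pos hπ]
    calc ‖segmentIntegral ff w₁ w₂ - Complex.I / (Real.pi:ℂ)‖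
        = ‖(segmentIntegral ff w₁ w₂ - A) + (A - Complex.I / (Real.pi:ℂ))‖ := by
          rw [sub_add_sub_cancel]
      _ ≤ ‖segmentIntegral ff w₁ w₂ - A‖ + ‖A - Complex.I / (Real.pi:ℂ)‖ := norm_add_le _ _
      _ ≤ 2*(ε N)/Real.pi + Real.exp (-(2*Real.pi*(N:ℝ)*τ))/Real.pi := by
          rw [hnorm2, ← hcdef]
          gcongr

end Aux

/-- For `τ > 0`, with `H N` the line integral of `z ↦ exp(iπz + log z / z)` along the
segment from `1` to `2N(1+τi)`, the limit `lim_{N→∞} H N` exists and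
`M_I = -i/π + lim_{N→∞} H N`, where `M_I = lim_{N→∞} ∫₁^{2N} e^{iπx} x^(1/x) dx`. -/
theorem contour_deformation (τ : ℝ) (hτ : 0 < τ) (M_I : ℂ)
    (hM : Tendsto
      (fun N : ℕ => ∫ x in (1 : ℝ)..(2 * N : ℝ),
        Complex.exp ((Real.pi : ℂ) * Complex.I * (x : ℂ)) *
          (Real.exp (Real.log x / x) : ℂ))
      atTop (nhds M_I)) :
    ∃ L : ℂ,
      Tendsto
        (fun N : ℕ =>
          segmentIntegral
            (fun z : ℂ => Complex.exp (Complex.I * (Real.pi : ℂ) * z + Complex.log z / z))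
            1 ((2 * N : ℂ) * (1 + (τ : ℂ) * Complex.I)))
        atTop (nhds L) ∧
      M_I = -Complex.I / (Real.pi : ℂ) + L := by
  refine ⟨M_I + Complex.I/(Real.pi:ℂ), ?_, by ring⟩
  have hff : (fun z : ℂ => Complex.exp (Complex.I * (Real.pi:ℂ) * z + Complex.log z / z)) = ff :=
    rfl
  rw [hff]
  -- the real-axis integral equals `FF (2N) - FF 1`
  have hre2N : ∀ N : ℕ, ((2*N : ℂ)).re = 2*(N:ℝ) := by intro N; simp
  have him2N : ∀ N : ℕ, ((2*N : ℂ)).im = 0 := by intro N; simp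
  have hreal : ∀ N : ℕ, 1 ≤ N →
      (∫ x in (1:ℝ)..(2*N:ℝ), Complex.exp ((Real.pi:ℂ)*Complex.I*(x:ℂ)) *
        ((Real.exp (Real.log x / x) : ℝ):ℂ)) = FF ((2*N:ℂ)) - FF 1 := by
    intro N hN
    have hn : (1:ℝ) ≤ (N:ℝ) := by exact_mod_cast hN
    have e0 : FF 1 = 0 := by
      simp [FF]
    have e1 : FF ((2*N:ℂ)) = ∫ x in (1:ℝ)..(2*(N:ℝ)), ff (x:ℂ) := by
      simp only [FF, hre2N, him2N, intervalIntegral.integral_same, smul_zero, add_zero]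
    rw [e0, e1, sub_zero]
    apply intervalIntegral.integral_congr
    intro x hx
    have hx0 : (0:ℝ) < x := by
      rw [Set.uIcc] at hx
      exact lt_of_lt_of_le (lt_min one_pos (by positivity)) hx.1
    simp only [ff]
    rw [Complex.exp_add, ← Complex.ofReal_log hx0.le]
    push_cast
    rw [show Complex.I * (Real.pi:ℂ) * (x:ℂ) = (Real.pi:ℂ) * Complex.I * (x:ℂ) from by ring]
  -- decompose the diagonal segment integral
  have hsplit : ∀ N : ℕ, 1 ≤ N →
      segmentIntegral ff 1 ((2*N : ℂ)*(1+(τ:ℂ)*Complex.I)) =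
        (FF ((2*N:ℂ)) - FF 1) +
          segmentIntegral ff ((2*N : ℂ)) ((2*N : ℂ)*(1+(τ:ℂ)*Complex.I)) := by
    intro N hN
    have hn : (1:ℝ) ≤ (N:ℝ) := by exact_mod_cast hN
    have h₁ : ∀ t : ℝ, t ∈ Set.uIcc (0:ℝ) 1 →
        0 < ((1:ℂ) + t * ((2*N : ℂ)*(1+(τ:ℂ)*Complex.I) - 1)).re := by
      intro t ht
      rw [Set.uIcc_of_le zero_le_one] at ht
      have hre : ((1:ℂ) + t * ((2*N : ℂ)*(1+(τ:ℂ)*Complex.I) - 1)).re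
          = 1 + t * (2*(N:ℝ) - 1) := by
        simp [Complex.add_re, Complex.mul_re]
      rw [hre]
      nlinarith [ht.1, ht.2]
    have h₂ : ∀ t : ℝ, t ∈ Set.uIcc (0:ℝ) 1 →
        0 < ((2*N : ℂ) + t * ((2*N : ℂ)*(1+(τ:ℂ)*Complex.I) - (2*N : ℂ))).re := by
      intro t ht
      have hre : ((2*N : ℂ) + t * ((2*N : ℂ)*(1+(τ:ℂ)*Complex.I) - (2*N : ℂ))).re
          = 2*(N:ℝ) := by
        simp [Complex.add_re, Complex.mul_re]
      rw [hre]
      positivity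
    rw [seg_eq 1 _ h₁, seg_eq ((2*N : ℂ)) _ h₂]
    ring
  -- put everything together
  have hM' : Tendsto (fun N : ℕ => FF ((2*N:ℂ)) - FF 1) atTop (nhds M_I) := by
    apply hM.congr'
    filter_upwards [eventually_ge_atTop 1] with N hN
    exact hreal N hN
  have hcomb := hM'.add (side_tendsto τ hτ)
  apply hcomb.congr'
  filter_upwards [eventually_ge_atTop 1] with N hN
  exact (hsplit N hN).symm
end

section
/- For every real number a, ∫₀¹ sin(a·x) · (ln x)/x dx = −a · Σ_{n=0}^∞ (−1)^n · a^{2n} / ((2n+1)! · (2n+1)²), the integral being absolutely convergent and the series absolutely convergent. -/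
open MeasureTheory Real Set Filter Topology

lemma integrableOn_pow_mul_log (n : ℕ) :
    IntegrableOn (fun x : ℝ => x ^ n * Real.log x) (Set.Ioc (0:ℝ) 1) := by
  have hg : IntegrableOn (fun x : ℝ => 2 * x ^ (-(1/2) : ℝ)) (Set.Ioc (0:ℝ) 1) := by
    have := (intervalIntegral.intervalIntegrable_rpow' (a := 0) (b := 1)
      (by norm_num : (-1:ℝ) < -(1/2)))
    rw [intervalIntegrable_iff_integrableOn_Ioc_of_le zero_le_one] at this
    exact this.const_mul 2
  refine Integrable.mono' hg ?_ ?_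
  · exact ((measurable_id.pow_const n).mul Real.measurable_log).aestronglyMeasurable
  · rw [ae_restrict_iff' measurableSet_Ioc]
    filter_upwards with x hx
    have hx0 : 0 < x := hx.1
    have hlog : |Real.log x| ≤ 2 * x ^ (-(1/2) : ℝ) := by
      have h1 : Real.log x ≤ 0 := Real.log_nonpos hx0.le hx.2
      rw [abs_of_nonpos h1]
      have : -Real.log x = 2 * Real.log (x ^ (-(1/2) : ℝ)) := by
        rw [Real.log_rpow hx0]; ring
      rw [this]
      have hpos : 0 < x ^ (-(1/2) : ℝ) := Real.rpow_pos_of_pos hx0 _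
      have := Real.log_le_sub_one_of_pos hpos
      nlinarith
    have hxn : |x ^ n| ≤ 1 := by
      rw [abs_of_nonneg (pow_nonneg hx0.le n)]
      exact pow_le_one₀ hx0.le hx.2
    calc ‖x ^ n * Real.log x‖ = |x ^ n| * |Real.log x| := abs_mul _ _
      _ ≤ 1 * (2 * x ^ (-(1/2) : ℝ)) := by
          exact mul_le_mul hxn hlog (abs_nonneg _) zero_le_one
      _ = 2 * x ^ (-(1/2) : ℝ) := one_mul _

lemma integral_pow_mul_log (n : ℕ) :
    ∫ x in Set.Ioc (0:ℝ) 1, x ^ n * Real.log x = -(1 / ((n:ℝ) + 1) ^ 2) := by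
  have hn : ((n:ℝ) + 1) ≠ 0 := by positivity
  rw [← intervalIntegral.integral_of_le zero_le_one]
  have hint : IntervalIntegrable (fun x : ℝ => x ^ n * Real.log x) volume 0 1 := by
    rw [intervalIntegrable_iff_integrableOn_Ioc_of_le zero_le_one]
    exact integrableOn_pow_mul_log n
  have := intervalIntegral.integral_eq_sub_of_hasDerivAt_of_tendsto
    (f := fun x : ℝ => x ^ (n+1) * Real.log x / (n+1) - x ^ (n+1) / ((n:ℝ)+1)^2)
    (f' := fun x : ℝ => x ^ n * Real.log x)
    (a := 0) (b := 1) (fa := 0) (fb := -(1 / ((n:ℝ)+1)^2)) zero_lt_one ?_ hint ?_ ?_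
  · rw [this]; ring
  · intro x hx
    have hx0 : x ≠ 0 := ne_of_gt hx.1
    have h1 : HasDerivAt (fun x : ℝ => x ^ (n+1) * Real.log x)
        (((n:ℝ)+1) * x ^ n * Real.log x + x ^ (n+1) * x⁻¹) x := by
      have := (hasDerivAt_pow (n+1) x).mul (Real.hasDerivAt_log hx0)
      refine this.congr_deriv ?_
      simp only [Nat.add_sub_cancel]; push_cast; ring
    have h2 : HasDerivAt (fun x : ℝ => x ^ (n+1) / ((n:ℝ)+1)^2)
        (((n:ℝ)+1) * x ^ n / ((n:ℝ)+1)^2) x := by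
      have := (hasDerivAt_pow (n+1) x).div_const (((n:ℝ)+1)^2)
      refine this.congr_deriv ?_
      simp only [Nat.add_sub_cancel]; push_cast; ring
    have := (h1.div_const ((n:ℝ)+1)).sub h2
    convert this using 1
    · rfl
    field_simp
    ring
  · have h1 : Tendsto (fun x : ℝ => x ^ (n+1) * Real.log x / (n+1)) (𝓝[>] (0:ℝ)) (𝓝 0) := by
      have := tendsto_log_mul_rpow_nhdsGT_zero (r := (n:ℝ)+1) (by positivity)
      have h := this.div_const ((n:ℝ)+1)
      rw [zero_div] at h
      refine h.congr' ?_
      filter_upwards [self_mem_nhdsWithin] with x hx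
      rw [← Real.rpow_natCast x (n+1)]
      push_cast
      ring
    have h2 : Tendsto (fun x : ℝ => x ^ (n+1) / ((n:ℝ)+1)^2) (𝓝[>] (0:ℝ)) (𝓝 0) := by
      have : ContinuousAt (fun x : ℝ => x ^ (n+1) / ((n:ℝ)+1)^2) 0 := by fun_prop
      have h : Tendsto (fun x : ℝ => x ^ (n+1) / ((n:ℝ)+1)^2) (𝓝[>] (0:ℝ)) (𝓝 ((0:ℝ) ^ (n+1) / ((n:ℝ)+1)^2)) := this.tendsto.mono_left nhdsWithin_le_nhds
      simpa using h
    simpa using h1.sub h2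
  · have : ContinuousAt (fun x : ℝ => x ^ (n+1) * Real.log x / (n+1) - x ^ (n+1) / ((n:ℝ)+1)^2) 1 := by
      have : ContinuousAt Real.log 1 := Real.continuousAt_log one_ne_zero
      fun_prop (disch := norm_num)
    have h : Tendsto _ (𝓝[<] (1:ℝ)) _ := this.tendsto.mono_left nhdsWithin_le_nhds
    simpa using h

open MeasureTheory

/-- For every real `a`,
`∫₀¹ sin(ax) (ln x)/x dx = -a Σ_{n≥0} (-1)^n a^{2n} / ((2n+1)! (2n+1)²)`,
the integral being absolutely convergent and the series absolutely convergent. -/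
theorem sin_log_integral_zero_one (a : ℝ) :
    IntegrableOn (fun x : ℝ => Real.sin (a * x) * Real.log x / x) (Set.Ioc (0 : ℝ) 1) ∧
    Summable (fun n : ℕ =>
      |(-1 : ℝ) ^ n * a ^ (2 * n) / ((2 * n + 1).factorial * (2 * n + 1 : ℝ) ^ 2)|) ∧
    (∫ x in Set.Ioc (0 : ℝ) 1, Real.sin (a * x) * Real.log x / x) =
      -a * ∑' n : ℕ,
        (-1 : ℝ) ^ n * a ^ (2 * n) / ((2 * n + 1).factorial * (2 * n + 1 : ℝ) ^ 2) := by
  have hfact : ∀ n : ℕ, (0:ℝ) < (2*n+1).factorial := fun n => by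
    exact_mod_cast Nat.factorial_pos _
  have hf : Summable (fun k : ℕ => |a| ^ k / k.factorial) := Real.summable_pow_div_factorial _
  have hinj : Function.Injective (fun n : ℕ => 2*n) := fun m n h => by
    simp only [] at h; omega
  have hf2 : Summable (fun n : ℕ => |a| ^ (2*n) / (2*n).factorial) :=
    hf.comp_injective hinj
  have hone_le : ∀ n : ℕ, (1:ℝ) ≤ ((2*n:ℝ)+1)^2 := fun n => by
    have : (0:ℝ) ≤ (n:ℝ) := Nat.cast_nonneg n
    nlinarith
  have hsummable : Summable (fun n : ℕ =>
      |(-1 : ℝ) ^ n * a ^ (2 * n) / ((2 * n + 1).factorial * (2 * n + 1 : ℝ) ^ 2)|) := by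
    refine Summable.of_nonneg_of_le (fun n => abs_nonneg _) (fun n => ?_) hf2
    have h1 : |(-1 : ℝ) ^ n * a ^ (2 * n) / ((2 * n + 1).factorial * (2 * n + 1 : ℝ) ^ 2)|
        = |a| ^ (2*n) / ((2 * n + 1).factorial * (2 * n + 1 : ℝ) ^ 2) := by
      rw [abs_div, abs_mul, abs_pow, abs_pow, abs_neg, abs_one, one_pow, one_mul,
        abs_of_pos (by positivity : (0:ℝ) < (2 * n + 1).factorial * (2 * n + 1 : ℝ) ^ 2)]
    rw [h1]
    have hle : ((2*n).factorial : ℝ) ≤ ((2*n+1).factorial : ℝ) * (2 * n + 1 : ℝ) ^ 2 := by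
      have h2 : ((2*n).factorial : ℝ) ≤ ((2*n+1).factorial : ℝ) := by
        exact_mod_cast Nat.factorial_le (by omega)
      have h3 := hone_le n
      nlinarith [hfact n, (by positivity : (0:ℝ) < ((2*n).factorial : ℝ))]
    gcongr
  set c : ℕ → ℝ := fun n => (-1 : ℝ) ^ n * a ^ (2*n+1) / (2*n+1).factorial with hc
  set F : ℕ → ℝ → ℝ := fun n x => c n * (x ^ (2*n) * Real.log x) with hF
  have hFint : ∀ n, IntegrableOn (F n) (Set.Ioc (0:ℝ) 1) :=
    fun n => (integrableOn_pow_mul_log (2*n)).const_mul _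
  have hFval : ∀ n, ∫ x in Set.Ioc (0:ℝ) 1, F n x = c n * -(1 / ((2*n:ℝ)+1)^2) := by
    intro n
    rw [hF]
    simp only []
    rw [MeasureTheory.integral_const_mul, integral_pow_mul_log]
    push_cast
    ring
  have habs : ∀ n, |c n| = |a| ^ (2*n+1) / ((2*n+1).factorial : ℝ) := by
    intro n
    rw [hc]
    simp only []
    rw [abs_div, abs_mul, abs_pow, abs_pow, abs_neg, abs_one, one_pow, one_mul,
      abs_of_pos (hfact n)]
  have hcle : ∀ n, |c n| ≤ |a| * (|a| ^ (2*n) / (2*n).factorial) := by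
    intro n
    rw [habs n]
    have h2 : |a| ^ (2*n+1) / ((2*n+1).factorial : ℝ) ≤ |a| ^ (2*n+1) / ((2*n).factorial : ℝ) := by
      have hfle : ((2*n).factorial : ℝ) ≤ ((2*n+1).factorial : ℝ) := by
        exact_mod_cast Nat.factorial_le (by omega : 2*n ≤ 2*n+1)
      gcongr <;> positivity
    calc |a| ^ (2*n+1) / ((2*n+1).factorial : ℝ) ≤ |a| ^ (2*n+1) / ((2*n).factorial : ℝ) := h2
      _ = |a| * (|a| ^ (2*n) / (2*n).factorial) := by rw [pow_succ]; ring
  have hFnorm : ∀ n, ∫ x in Set.Ioc (0:ℝ) 1, ‖F n x‖ = |c n| * (1 / ((2*n:ℝ)+1)^2) := by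
    intro n
    have heq : ∀ x ∈ Set.Ioc (0:ℝ) 1, ‖F n x‖ = |c n| * -(x ^ (2*n) * Real.log x) := by
      intro x hx
      have h1 : Real.log x ≤ 0 := Real.log_nonpos hx.1.le hx.2
      have h2 : x ^ (2*n) * Real.log x ≤ 0 :=
        mul_nonpos_of_nonneg_of_nonpos (pow_nonneg hx.1.le _) h1
      rw [hF]
      simp only []
      rw [Real.norm_eq_abs, abs_mul, abs_of_nonpos h2]
    rw [MeasureTheory.setIntegral_congr_fun measurableSet_Ioc heq,
      MeasureTheory.integral_const_mul, MeasureTheory.integral_neg, integral_pow_mul_log]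
    push_cast
    ring
  have hnormsum : Summable (fun n => ∫ x in Set.Ioc (0:ℝ) 1, ‖F n x‖) := by
    refine Summable.congr ?_ (fun n => (hFnorm n).symm)
    refine Summable.of_nonneg_of_le (fun n => by positivity) (fun n => ?_)
      (hf2.mul_left |a|)
    have h4 : |c n| * (1 / ((2*n:ℝ)+1)^2) ≤ |c n| * 1 := by
      apply mul_le_mul_of_nonneg_left _ (abs_nonneg _)
      rw [div_le_one (by positivity)]
      exact hone_le n
    calc |c n| * (1 / ((2*n:ℝ)+1)^2) ≤ |c n| * 1 := h4
      _ = |c n| := mul_one _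
      _ ≤ |a| * (|a| ^ (2*n) / (2*n).factorial) := hcle n
  have hptwise : ∀ x ∈ Set.Ioc (0:ℝ) 1,
      Real.sin (a * x) * Real.log x / x = ∑' n, F n x := by
    intro x hx
    have hx0 : x ≠ 0 := ne_of_gt hx.1
    have hs := (Real.hasSum_sin (a*x)).mul_right (Real.log x / x)
    have heq : (fun n : ℕ => (-1:ℝ) ^ n * (a*x) ^ (2*n+1) / (2*n+1).factorial * (Real.log x / x))
        = fun n => F n x := by
      funext n
      rw [hF, hc]
      simp only [mul_pow]
      field_simp
      ring
    rw [heq] at hs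
    rw [mul_div_assoc, ← hs.tsum_eq]
  have hintegrable : IntegrableOn (fun x : ℝ => Real.sin (a * x) * Real.log x / x)
      (Set.Ioc (0 : ℝ) 1) := by
    have h0 : IntegrableOn (fun x : ℝ => |x ^ 0 * Real.log x|) (Set.Ioc (0:ℝ) 1) :=
      (integrableOn_pow_mul_log 0).abs
    have h2 : IntegrableOn (fun x : ℝ => |Real.log x|) (Set.Ioc (0:ℝ) 1) :=
      h0.congr_fun (fun x hx => by simp) measurableSet_Ioc
    have hlog : IntegrableOn (fun x : ℝ => |a| * |Real.log x|) (Set.Ioc (0:ℝ) 1) :=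
      h2.const_mul _
    refine Integrable.mono' hlog ?_ ?_
    · apply Measurable.aestronglyMeasurable
      exact ((Real.measurable_sin.comp (measurable_const.mul measurable_id)).mul
        Real.measurable_log).div measurable_id
    · rw [MeasureTheory.ae_restrict_iff' measurableSet_Ioc]
      filter_upwards with x hx
      have hx0 : 0 < x := hx.1
      have hsin : |Real.sin (a*x)| ≤ |a| * x := by
        calc |Real.sin (a*x)| ≤ |a*x| := Real.abs_sin_le_abs
          _ = |a| * x := by rw [abs_mul, abs_of_pos hx0]
      rw [Real.norm_eq_abs, abs_div, abs_mul, abs_of_pos hx0]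
      rw [div_le_iff₀ hx0]
      calc |Real.sin (a*x)| * |Real.log x| ≤ (|a| * x) * |Real.log x| :=
            mul_le_mul_of_nonneg_right hsin (abs_nonneg _)
        _ = |a| * |Real.log x| * x := by ring
  refine ⟨hintegrable, hsummable, ?_⟩
  have key := MeasureTheory.integral_tsum_of_summable_integral_norm
    (μ := volume.restrict (Set.Ioc (0:ℝ) 1)) (F := F) hFint hnormsum
  rw [MeasureTheory.setIntegral_congr_fun measurableSet_Ioc hptwise, ← key, ← tsum_mul_left]
  refine tsum_congr fun n => ?_
  rw [hFval n, hc]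
  simp only []
  have h1 : (0:ℝ) < ((2*n+1).factorial : ℝ) := hfact n
  have h2 : ((2*n:ℝ)+1) ≠ 0 := by positivity
  push_cast
  field_simp
  ring
end

section
/- Let k be a natural number, let s be a real number with s > 1, and let a be a real number. Then ∫₀^a ( ∫₁^∞ e^{ia'x} · (ln x)^k / x^s dx ) da' = −i · ∫₁^∞ e^{iax} · (ln x)^k / x^{s+1} dx + i · k! / s^{k+1}, where all inner integrals converge absolutely. -/
open MeasureTheory

section Aux
open Real Set Filter Asymptotics Complex

lemma aux_int (k : ℕ) {t : ℝ} (ht : 1 < t) :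
    IntegrableOn (fun x : ℝ => Real.log x ^ k / x ^ t) (Set.Ici 1) := by
  have hcont : ContinuousOn (fun x : ℝ => Real.log x ^ k / x ^ t) (Set.Ici 1) := by
    intro x hx
    have hx0 : (0:ℝ) < x := lt_of_lt_of_le one_pos hx
    exact (((Real.continuousAt_log hx0.ne').pow k).continuousWithinAt).div
      ((Real.continuousAt_rpow_const x t (Or.inl hx0.ne')).continuousWithinAt)
      (by positivity)
  refine (hcont.locallyIntegrableOn measurableSet_Ici).integrableOn_of_isBigO_atTop
    (g := fun x => x ^ (-((1+t)/2))) ?_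
    ⟨Set.Ioi 1, Ioi_mem_atTop 1, integrableOn_Ioi_rpow_of_lt (by linarith) one_pos⟩
  have h1 : (fun x : ℝ => Real.log x ^ k) =o[atTop] fun x : ℝ => x ^ (t - (1+t)/2) :=
    (isLittleO_log_rpow_rpow_atTop (k : ℝ) (by linarith)).congr'
      (by filter_upwards [eventually_ge_atTop 1] with x hx
          rw [Real.rpow_natCast]) EventuallyEq.rfl
  have h2 := h1.isBigO.mul (isBigO_refl (fun x : ℝ => x ^ (-t)) atTop)
  refine h2.congr' ?_ ?_
  · filter_upwards [eventually_gt_atTop 0] with x hx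
    rw [div_eq_mul_inv, ← Real.rpow_neg hx.le]
  · filter_upwards [eventually_gt_atTop 0] with x hx
    rw [← Real.rpow_add hx]
    ring_nf

lemma aux_val (k : ℕ) {t : ℝ} (ht : 0 < t) :
    ∫ x in Ioi (1:ℝ), Real.log x ^ k / x ^ (t + 1) = k.factorial / t ^ (k + 1) := by
  have heq : ∀ x : ℝ, Real.log (Real.exp x) ^ k / (Real.exp x) ^ (t + 1) * Real.exp x
      = x ^ k * Real.exp (-(t * x)) := by
    intro x
    rw [Real.rpow_def_of_pos (Real.exp_pos x), Real.log_exp,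
      div_mul_eq_mul_div, mul_div_assoc, ← Real.exp_sub]
    congr 2
    ring
  have himg1 : Real.exp '' Ioi 0 ⊆ Ioi 1 := by
    rintro _ ⟨y, hy, rfl⟩; exact Real.one_lt_exp_iff.mpr hy
  have himg2 : Real.exp '' Ici 0 ⊆ Ici 1 := by
    rintro _ ⟨y, hy, rfl⟩; simpa using Real.one_le_exp hy
  have hsub := integral_comp_mul_deriv_Ioi (f := Real.exp) (f' := Real.exp)
    (g := fun x => Real.log x ^ k / x ^ (t + 1)) (a := 0)
    (Real.continuous_exp.continuousOn) Real.tendsto_exp_atTop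
    (fun x _ => (Real.hasDerivAt_exp x).hasDerivWithinAt)
    ?_ ?_ ?_
  · rw [Real.exp_zero] at hsub
    rw [← hsub]
    have heq' : ∀ x ∈ Ioi (0:ℝ),
        ((fun x => Real.log x ^ k / x ^ (t + 1)) ∘ Real.exp) x * Real.exp x
          = x ^ k * Real.exp (-(t * x)) := fun x _ => heq x
    rw [setIntegral_congr_fun measurableSet_Ioi heq']
    have := Real.integral_rpow_mul_exp_neg_mul_Ioi (a := (k:ℝ) + 1) (r := t) (by positivity) ht
    rw [show ((k:ℝ) + 1 - 1) = (k:ℝ) by ring] at this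
    have h2 : ∀ x ∈ Ioi (0:ℝ), x ^ ((k:ℝ)) * Real.exp (-(t * x)) = x ^ k * Real.exp (-(t*x)) := by
      intro x hx; rw [Real.rpow_natCast]
    rw [setIntegral_congr_fun measurableSet_Ioi h2] at this
    rw [this, Real.Gamma_nat_eq_factorial (n := k),
      show ((k:ℝ)+1) = ((k+1:ℕ):ℝ) by push_cast; ring, Real.rpow_natCast, one_div, inv_pow]
    ring
  · intro x hx
    have hx1 : (1:ℝ) < x := himg1 hx
    have hx0 : (0:ℝ) < x := lt_trans one_pos hx1
    exact (((Real.continuousAt_log hx0.ne').pow k).continuousWithinAt).div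
      ((Real.continuousAt_rpow_const x (t+1) (Or.inl hx0.ne')).continuousWithinAt)
      (by positivity)
  · exact (aux_int k (by linarith)).mono_set himg2
  · rw [integrableOn_Ici_iff_integrableOn_Ioi]
    have h3 : IntegrableOn (fun x : ℝ => x ^ ((k:ℝ)) * Real.exp (-t * x ^ (1:ℝ))) (Ioi 0) :=
      integrableOn_rpow_mul_exp_neg_mul_rpow
        ((by norm_num : (-1:ℝ) < 0).trans_le (Nat.cast_nonneg k)) one_pos ht
    refine h3.congr_fun (fun x hx => ?_) measurableSet_Ioi
    simp only [Function.comp_apply, Real.rpow_one, Real.rpow_natCast, neg_mul]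
    exact (heq x).symm

lemma aux_cint (k : ℕ) {t : ℝ} (ht : 1 < t) (b : ℝ) :
    IntegrableOn
      (fun x : ℝ => Complex.exp (Complex.I * (b : ℂ) * (x : ℂ)) *
        ((Real.log x ^ k / x ^ t : ℝ) : ℂ))
      (Set.Ioi (1 : ℝ)) := by
  have hm : Measurable (fun x : ℝ => Real.log x ^ k / x ^ t) :=
    by measurability
  have hmeas : AEStronglyMeasurable
      (fun x : ℝ => Complex.exp (Complex.I * (b : ℂ) * (x : ℂ)) *
        ((Real.log x ^ k / x ^ t : ℝ) : ℂ)) (volume.restrict (Ioi 1)) := by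
    refine AEStronglyMeasurable.mul ?_ ?_
    · exact (Complex.continuous_exp.comp (continuous_const.mul Complex.continuous_ofReal)).aestronglyMeasurable
    · exact (Complex.measurable_ofReal.comp hm).aestronglyMeasurable
  refine Integrable.mono' ((aux_int k ht).mono_set Ioi_subset_Ici_self) hmeas ?_
  filter_upwards [ae_restrict_mem measurableSet_Ioi] with x hx
  have hx1 : (1:ℝ) < x := hx
  have hx0 : (0:ℝ) < x := lt_trans one_pos hx1
  have hre : (Complex.I * (b : ℂ) * (x : ℂ)).re = 0 := by
    simp [Complex.mul_re, Complex.mul_im]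
  rw [norm_mul, Complex.norm_exp, hre, Real.exp_zero,
    one_mul, Complex.norm_real, Real.norm_eq_abs, _root_.abs_of_nonneg]
  have := Real.log_nonneg hx1.le
  positivity

end Aux

open Real Set Filter Asymptotics Complex in
/-- For `k ∈ ℕ`, real `s > 1` and real `a`:
`∫₀^a (∫₁^∞ e^{ia'x} (ln x)^k / x^s dx) da'
  = -i ∫₁^∞ e^{iax} (ln x)^k / x^{s+1} dx + i k!/s^{k+1}`,
all inner integrals converging absolutely. -/
theorem integro_exponential_raise_s (k : ℕ) (s : ℝ) (hs : 1 < s) (a : ℝ) :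
    (∀ b : ℝ, IntegrableOn
      (fun x : ℝ => Complex.exp (Complex.I * (b : ℂ) * (x : ℂ)) *
        ((Real.log x ^ k / x ^ s : ℝ) : ℂ))
      (Set.Ioi (1 : ℝ))) ∧
    IntegrableOn
      (fun x : ℝ => Complex.exp (Complex.I * (a : ℂ) * (x : ℂ)) *
        ((Real.log x ^ k / x ^ (s + 1) : ℝ) : ℂ))
      (Set.Ioi (1 : ℝ)) ∧
    (∫ a' in (0 : ℝ)..a,
        ∫ x in Set.Ioi (1 : ℝ),
          Complex.exp (Complex.I * (a' : ℂ) * (x : ℂ)) *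
            ((Real.log x ^ k / x ^ s : ℝ) : ℂ)) =
      -Complex.I *
          (∫ x in Set.Ioi (1 : ℝ),
            Complex.exp (Complex.I * (a : ℂ) * (x : ℂ)) *
              ((Real.log x ^ k / x ^ (s + 1) : ℝ) : ℂ)) +
        Complex.I * (k.factorial : ℂ) / (s : ℂ) ^ (k + 1) := by
  have hs1 : 1 < s + 1 := by linarith
  refine ⟨fun b => aux_cint k hs b, aux_cint k hs1 a, ?_⟩
  set F : ℝ → ℝ → ℂ := fun a' x => Complex.exp (Complex.I * (a' : ℂ) * (x : ℂ)) *
      ((Real.log x ^ k / x ^ s : ℝ) : ℂ) with hF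
  -- product integrability
  have hm : Measurable (fun x : ℝ => Real.log x ^ k / x ^ s) := by measurability
  have hprod : ∀ c d : ℝ, Integrable (Function.uncurry F)
      ((volume.restrict (Ioc c d)).prod (volume.restrict (Ioi 1))) := by
    intro c d
    constructor
    · refine AEStronglyMeasurable.mul ?_ ?_
      · refine (Complex.continuous_exp.comp ?_).aestronglyMeasurable
        exact (continuous_const.mul ((Complex.continuous_ofReal.comp continuous_fst))).mul
          (Complex.continuous_ofReal.comp continuous_snd)
      · exact (Complex.measurable_ofReal.comp (hm.comp measurable_snd)).aestronglyMeasurable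
    · have hb : Integrable (fun p : ℝ × ℝ => (1:ℝ) * (Real.log p.2 ^ k / p.2 ^ s))
          ((volume.restrict (Ioc c d)).prod (volume.restrict (Ioi 1))) :=
        (integrable_const (1:ℝ)).mul_prod ((aux_int k hs).mono_set Ioi_subset_Ici_self)
      refine HasFiniteIntegral.mono' hb.hasFiniteIntegral ?_
      rw [Measure.prod_restrict]
      filter_upwards [ae_restrict_mem (measurableSet_Ioc.prod measurableSet_Ioi)] with p hp
      have hx1 : (1:ℝ) < p.2 := hp.2
      have hx0 : (0:ℝ) < p.2 := lt_trans one_pos hx1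
      have hre : (Complex.I * (p.1 : ℂ) * (p.2 : ℂ)).re = 0 := by
        simp [Complex.mul_re, Complex.mul_im]
      rw [one_mul]
      show ‖Complex.exp _ * _‖ ≤ _
      rw [norm_mul, Complex.norm_exp, hre, Real.exp_zero,
        one_mul, Complex.norm_real, Real.norm_eq_abs, _root_.abs_of_nonneg]
      have := Real.log_nonneg hx1.le
      positivity
  have hswap : (∫ a' in (0 : ℝ)..a, ∫ x in Ioi (1:ℝ), F a' x)
      = ∫ x in Ioi (1:ℝ), ∫ a' in (0 : ℝ)..a, F a' x := by
    rcases le_total 0 a with h | h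
    · rw [intervalIntegral.integral_of_le h, integral_integral_swap (hprod 0 a)]
      exact setIntegral_congr_fun measurableSet_Ioi fun x _ =>
        (intervalIntegral.integral_of_le h).symm
    · rw [intervalIntegral.integral_of_ge h, integral_integral_swap (hprod a 0), ← integral_neg]
      exact setIntegral_congr_fun measurableSet_Ioi fun x _ =>
        (intervalIntegral.integral_of_ge h).symm
  rw [hswap]
  -- inner integral evaluation
  have hinner : ∀ x ∈ Ioi (1:ℝ), (∫ a' in (0:ℝ)..a, F a' x)
      = -Complex.I * (Complex.exp (Complex.I * (a : ℂ) * (x : ℂ)) *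
          ((Real.log x ^ k / x ^ (s + 1) : ℝ) : ℂ))
        + Complex.I * ((Real.log x ^ k / x ^ (s + 1) : ℝ) : ℂ) := by
    intro x hx
    have hx1 : (1:ℝ) < x := hx
    have hx0 : (0:ℝ) < x := lt_trans one_pos hx1
    have hxC : (x:ℂ) ≠ 0 := by exact_mod_cast hx0.ne'
    have hIx : Complex.I * (x:ℂ) ≠ 0 := mul_ne_zero Complex.I_ne_zero hxC
    have h1 : (∫ a' in (0:ℝ)..a, F a' x)
        = (∫ a' in (0:ℝ)..a, Complex.exp ((Complex.I * (x:ℂ)) * (a' : ℂ)))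
            * ((Real.log x ^ k / x ^ s : ℝ) : ℂ) := by
      rw [← intervalIntegral.integral_mul_const]
      apply intervalIntegral.integral_congr
      intro a' _
      simp only [hF]
      ring_nf
    rw [h1, integral_exp_mul_complex hIx]
    have hcast : ((Real.log x ^ k / x ^ (s+1) : ℝ) : ℂ)
        = ((Real.log x ^ k / x ^ s : ℝ) : ℂ) / (x:ℂ) := by
      rw [Real.rpow_add hx0, Real.rpow_one]
      push_cast
      ring
    rw [hcast]
    rw [Complex.ofReal_zero, mul_zero, Complex.exp_zero]
    have : Complex.I * (x:ℂ) * (a:ℂ) = Complex.I * (a:ℂ) * (x:ℂ) := by ring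
    rw [this]
    field_simp
    ring_nf
    simp [Complex.I_sq]
    ring
  rw [setIntegral_congr_fun measurableSet_Ioi hinner]
  have hint1 : IntegrableOn (fun x : ℝ => -Complex.I *
      (Complex.exp (Complex.I * (a : ℂ) * (x : ℂ)) *
        ((Real.log x ^ k / x ^ (s + 1) : ℝ) : ℂ))) (Ioi 1) :=
    (aux_cint k hs1 a).const_mul _
  have hint2 : IntegrableOn (fun x : ℝ =>
      Complex.I * ((Real.log x ^ k / x ^ (s + 1) : ℝ) : ℂ)) (Ioi 1) :=
    (((aux_int k hs1).mono_set Ioi_subset_Ici_self).ofReal (𝕜 := ℂ)).const_mul _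
  have hval : (∫ x in Ioi (1:ℝ), ((Real.log x ^ k / x ^ (s+1) : ℝ) : ℂ))
      = (((k.factorial : ℝ) / s ^ (k+1) : ℝ) : ℂ) := by
    rw [← aux_val k (show (0:ℝ) < s by linarith)]
    exact integral_ofReal
  rw [integral_add hint1 hint2, integral_const_mul, integral_const_mul, hval]
  push_cast
  ring
end
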